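/- arXiv:2511.05710 — 8 statements merged into one kernel-verified Lean document; each statement's English description precedes it below -/
import Mathlib

section
/- Fix an integer m ≥ 2, a real c > 0 with c ≠ m^{-1/2}, nonnegative reals σ_1, …, σ_{m+1} that are not all zero, and a real δ. For each n ∈ ℕ let (X_{n,1}, …, X_{n,m+1}) be an ℝ^{m+1}-valued random vector and δ_n a real number, and suppose δ_n → δ and the law of (X_{n,1}, …, X_{n,m+1}) converges weakly (in distribution) to the product measure N(0,σ_1²) ⊗ ⋯ ⊗ N(0,σ_{m+1}²) as n → ∞. Then P[(X_{n,m+1} + δ_n − X̄_n)² > c² Ŝ_n²] → P[(ψ_{m+1} + δ − ψ̄_m)² > c² S_m²] as n → ∞, where X̄_n and Ŝ_n² are the sample mean and sample variance of X_{n,1}, …, X_{n,m}, ψ_1, …, ψ_{m+1} are independent with ψ_j ~ N(0,σ_j²), and ψ̄_m, S_m² are the sample mean and sample variance of ψ_1, …, ψ_m. (This is the paper's Theorem 1: with X_{n,j} = √n(θ̂_j − μ_0) for j ≤ m, X_{n,m+1} = √n(θ̂_{m+1} − μ_1) and δ_n = √n(μ_1 − μ_0), the left side equals P[|T̂_m|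 > c] and the right side equals P[|T_m| > c].) -/
open MeasureTheory ProbabilityTheory Filter

/-- Sample mean of `y_1, …, y_m`. -/
noncomputable def sMean {m : ℕ} (y : Fin m → ℝ) : ℝ := (∑ j, y j) / (m : ℝ)

/-- Sample variance of `y_1, …, y_m`. -/
noncomputable def sVar {m : ℕ} (y : Fin m → ℝ) : ℝ :=
  (∑ j, (y j - sMean y) ^ 2) / ((m : ℝ) - 1)

/-- The product Gaussian measure `N(0,σ_1²) ⊗ ⋯ ⊗ N(0,σ_{m+1}²)` on `ℝ^{m+1}`. -/
noncomputable def limitLaw (m : ℕ) (σ : Fin (m + 1) → ℝ) :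
    Measure (Fin (m + 1) → ℝ) :=
  Measure.pi (fun j => gaussianReal 0 ⟨σ j ^ 2, sq_nonneg _⟩)

open Topology

noncomputable def gfun (m : ℕ) (c δ : ℝ) (x : Fin (m+1) → ℝ) : ℝ :=
  (x (Fin.last m) + δ - sMean (fun i : Fin m => x i.castSucc)) ^ 2
    - c ^ 2 * sVar (fun i : Fin m => x i.castSucc)

lemma continuous_gfun (m : ℕ) (c δ : ℝ) : Continuous (gfun m c δ) := by
  unfold gfun sVar sMean
  fun_prop

lemma sum_sq_dev {m : ℕ} (hm : (m:ℝ) ≠ 0) (y : Fin m → ℝ) :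
    ∑ j, (y j - sMean y) ^ 2 = (∑ j, y j ^ 2) - (∑ j, y j) ^ 2 / m := by
  have h1 : ∀ j : Fin m, (y j - sMean y)^2
      = y j^2 - 2 * sMean y * y j + sMean y ^2 := fun j => by ring
  rw [Finset.sum_congr rfl fun j _ => h1 j, Finset.sum_add_distrib,
    Finset.sum_sub_distrib, ← Finset.mul_sum, Finset.sum_const, Finset.card_univ,
    Fintype.card_fin, nsmul_eq_mul]
  unfold sMean
  field_simp
  ring

lemma sVar_eq {m : ℕ} (hm : (m:ℝ) ≠ 0) (y : Fin m → ℝ) :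
    sVar y = ((∑ j, y j ^ 2) - (∑ j, y j) ^ 2 / m) / ((m : ℝ) - 1) := by
  rw [sVar, sum_sq_dev hm]

lemma sum_update {m : ℕ} (w : Fin m → ℝ) (k : Fin m) (t : ℝ) :
    ∑ j, Function.update w k t j = t + ((∑ j, w j) - w k) := by
  classical
  rw [Finset.sum_update_of_mem (Finset.mem_univ k)]
  congr 1
  rw [Finset.sum_sdiff_eq_sub (Finset.subset_univ {k}), Finset.sum_singleton]

lemma sum_update_sq {m : ℕ} (w : Fin m → ℝ) (k : Fin m) (t : ℝ) :
    ∑ j, (Function.update w k t j) ^ 2 = t ^ 2 + ((∑ j, w j ^ 2) - w k ^ 2) := by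
  classical
  have h : ∀ j, (Function.update w k t j) ^ 2
      = Function.update (fun i => w i ^ 2) k (t ^ 2) j := by
    intro j
    rcases eq_or_ne j k with rfl | h
    · simp
    · simp [Function.update_of_ne h]
  rw [Finset.sum_congr rfl fun j _ => h j, sum_update]

lemma quad_form (M c L d R Q : ℝ) (hM : M ≠ 0) (hM1 : M - 1 ≠ 0) (t : ℝ) :
    (L + d - (t+R)/M)^2 - c^2*(((t^2+Q) - (t+R)^2/M)/(M-1))
      = ((1 - M*c^2)/M^2) * t^2
        + (-2*(L+d-R/M)/M + 2*c^2*R/(M*(M-1))) * t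
        + ((L+d-R/M)^2 - c^2*(Q - R^2/M)/(M-1)) := by
  field_simp
  ring

lemma slice_quadratic (m : ℕ) (hm : 2 ≤ m) (c : ℝ) (hc : 0 < c)
    (hc' : c ≠ (Real.sqrt m)⁻¹) (δ : ℝ) (j : Fin (m+1)) :
    ∃ a : ℝ, a ≠ 0 ∧ ∀ x : Fin (m+1) → ℝ, ∃ b cc : ℝ, ∀ t : ℝ,
      gfun m c δ (Function.update x j t) = a*t^2 + b*t + cc := by
  have hm2 : (2:ℝ) ≤ (m:ℝ) := by exact_mod_cast hm
  have hM : (m:ℝ) ≠ 0 := by linarith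
  have hM1 : (m:ℝ) - 1 ≠ 0 := by linarith
  rcases Fin.eq_castSucc_or_eq_last j with ⟨k, rfl⟩ | rfl
  · refine ⟨(1 - (m:ℝ)*c^2)/(m:ℝ)^2, ?_, ?_⟩
    · have h1 : 1 - (m:ℝ)*c^2 ≠ 0 := by
        intro h
        apply hc'
        have hc2 : c^2 = ((m:ℝ))⁻¹ := by
          field_simp at h ⊢
          linarith
        rw [← Real.sqrt_sq hc.le, hc2, Real.sqrt_inv]
      exact div_ne_zero h1 (pow_ne_zero 2 hM)
    · intro x
      set w : Fin m → ℝ := fun i => x i.castSucc with hw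
      set R : ℝ := (∑ i, w i) - w k with hR
      set Q : ℝ := (∑ i, w i ^ 2) - w k ^ 2 with hQ
      set L : ℝ := x (Fin.last m) with hL
      have hcoords : ∀ t : ℝ,
          (fun i : Fin m => Function.update x k.castSucc t i.castSucc)
            = Function.update w k t := by
        intro t; funext i
        rcases eq_or_ne i k with rfl | h
        · simp
        · rw [Function.update_of_ne (fun hh => h (Fin.castSucc_injective _ hh)),
            Function.update_of_ne h]
      have hlast : ∀ t : ℝ, Function.update x k.castSucc t (Fin.last m) = L :=
        fun t => Function.update_of_ne (Fin.castSucc_lt_last k).ne' _ _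
      refine ⟨-2*(L+δ-R/(m:ℝ))/(m:ℝ) + 2*c^2*R/((m:ℝ)*((m:ℝ)-1)),
        (L+δ-R/(m:ℝ))^2 - c^2*(Q - R^2/(m:ℝ))/((m:ℝ)-1), fun t => ?_⟩
      have hmean : sMean (Function.update w k t) = (t + R)/(m:ℝ) := by
        rw [sMean, sum_update]
      have hvar : sVar (Function.update w k t)
          = ((t^2 + Q) - (t+R)^2/(m:ℝ))/((m:ℝ)-1) := by
        rw [sVar_eq hM, sum_update, sum_update_sq]
      show (Function.update x k.castSucc t (Fin.last m) + δ
          - sMean (fun i : Fin m => Function.update x k.castSucc t i.castSucc)) ^ 2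
          - c ^ 2 * sVar (fun i : Fin m => Function.update x k.castSucc t i.castSucc) = _
      rw [hlast t, hcoords t, hmean, hvar]
      exact quad_form (m:ℝ) c L δ R Q hM hM1 t
  · refine ⟨1, one_ne_zero, fun x => ?_⟩
    set w : Fin m → ℝ := fun i => x i.castSucc with hw
    have hcoords : ∀ t : ℝ,
        (fun i : Fin m => Function.update x (Fin.last m) t i.castSucc) = w := by
      intro t; funext i
      exact Function.update_of_ne (Fin.castSucc_lt_last i).ne _ _
    refine ⟨2*(δ - sMean w), (δ - sMean w)^2 - c^2 * sVar w, fun t => ?_⟩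
    show (Function.update x (Fin.last m) t (Fin.last m) + δ
        - sMean (fun i : Fin m => Function.update x (Fin.last m) t i.castSucc)) ^ 2
        - c ^ 2 * sVar (fun i : Fin m => Function.update x (Fin.last m) t i.castSucc) = _
    rw [Function.update_self, hcoords t]
    ring


lemma limitLaw_null_Z (m : ℕ) (hm : 2 ≤ m) (c : ℝ) (hc : 0 < c)
    (hc' : c ≠ (Real.sqrt m)⁻¹) (σ : Fin (m+1) → ℝ) (hσne : ∃ j, σ j ≠ 0) (δ : ℝ) :
    limitLaw m σ {x | gfun m c δ x = 0} = 0 := by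
  classical
  obtain ⟨j, hj⟩ := hσne
  obtain ⟨a, ha, hquad⟩ := slice_quadratic m hm c hc hc' δ j
  set μ : ∀ _ : Fin (m+1), Measure ℝ :=
    fun i => gaussianReal 0 ⟨σ i ^ 2, sq_nonneg _⟩ with hμ
  haveI : ∀ i, IsProbabilityMeasure (μ i) := fun i => instIsProbabilityMeasureGaussianReal 0 _
  set Z : Set (Fin (m+1) → ℝ) := {x | gfun m c δ x = 0} with hZdef
  have hZm : MeasurableSet Z :=
    (continuous_gfun m c δ).measurable (measurableSet_singleton 0)
  set p : Fin (m+1) → Prop := fun i => i ≠ j with hp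
  set e := MeasurableEquiv.piEquivPiSubtypeProd (fun _ : Fin (m+1) => ℝ) p with he
  have hmp := measurePreserving_piEquivPiSubtypeProd μ p
  have hBm : MeasurableSet (e.symm ⁻¹' Z) := e.symm.measurable hZm
  have key : Measure.pi μ Z
      = ((Measure.pi fun i : Subtype p => μ i).prod
          (Measure.pi fun i : {i // ¬ p i} => μ i)) (e.symm ⁻¹' Z) := by
    have hZeq : Z = e ⁻¹' (e.symm ⁻¹' Z) := by
      ext x; simp
    conv_lhs => rw [hZeq]
    exact hmp.measure_preimage hBm.nullMeasurableSet
  show Measure.pi μ Z = 0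
  rw [key, Measure.measure_prod_null hBm]
  refine Filter.Eventually.of_forall (fun r => ?_)
  set j₀ : {i // ¬ p i} := ⟨j, by simp [hp]⟩ with hj₀
  set x₀ : Fin (m+1) → ℝ := e.symm (r, fun _ => 0) with hx₀
  obtain ⟨b, cc, hbc⟩ := hquad x₀
  have hxu : ∀ u : {i // ¬ p i} → ℝ, e.symm (r, u) = Function.update x₀ j (u j₀) := by
    intro u; funext i
    rcases eq_or_ne i j with rfl | h
    · simp [he, hx₀, MeasurableEquiv.piEquivPiSubtypeProd,
        Equiv.piEquivPiSubtypeProd_symm_apply, hp, hj₀]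
    · rw [Function.update_of_ne h]
      simp only [he, hx₀, MeasurableEquiv.piEquivPiSubtypeProd,
        MeasurableEquiv.symm_mk, MeasurableEquiv.coe_mk,
        Equiv.piEquivPiSubtypeProd_symm_apply]
      rw [dif_pos h, dif_pos h]
  have hset : (Prod.mk r ⁻¹' (e.symm ⁻¹' Z))
      = Function.eval j₀ ⁻¹' {t : ℝ | a*t^2 + b*t + cc = 0} := by
    ext u
    simp only [Set.mem_preimage, hZdef, Set.mem_setOf_eq, hxu u, hbc, Function.eval]
  show (Measure.pi fun i : {i // ¬ p i} => μ i) (Prod.mk r ⁻¹' (e.symm ⁻¹' Z)) = 0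
  rw [hset]
  apply Measure.pi_eval_preimage_null
  have hfin : {t : ℝ | a*t^2+b*t+cc = 0}.Finite := by
    have hP : (Polynomial.C a * Polynomial.X^2 + Polynomial.C b * Polynomial.X
        + Polynomial.C cc : Polynomial ℝ) ≠ 0 := by
      intro h
      apply ha
      have h2 := congrArg (fun q => Polynomial.coeff q 2) h
      simpa using h2
    refine (Polynomial.finite_setOf_isRoot hP).subset ?_
    intro t ht
    simp only [Set.mem_setOf_eq, Polynomial.IsRoot, Polynomial.eval_add,
      Polynomial.eval_mul, Polynomial.eval_pow, Polynomial.eval_C, Polynomial.eval_X]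
    simpa using ht
  have hvol : (volume : Measure ℝ) {t : ℝ | a*t^2+b*t+cc = 0} = 0 :=
    hfin.measure_zero _
  have hv : (⟨σ j ^ 2, sq_nonneg _⟩ : NNReal) ≠ 0 := by
    intro h
    apply hj
    have h2 : σ j ^ 2 = 0 := by exact congrArg NNReal.toReal h
    exact pow_eq_zero_iff (by norm_num) |>.mp h2
  exact gaussianReal_absolutelyContinuous 0 hv hvol

/-- Theorem 1 of the paper: convergence of the rejection probability of the `t`-test
to its value under the limiting normal law. -/
theorem stmt0 (m : ℕ) (hm : 2 ≤ m) (c : ℝ) (hc : 0 < c)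
    (hc' : c ≠ (Real.sqrt m)⁻¹)
    (σ : Fin (m + 1) → ℝ) (hσ : ∀ j, 0 ≤ σ j) (hσne : ∃ j, σ j ≠ 0)
    (δ : ℝ) (δseq : ℕ → ℝ) (hδ : Tendsto δseq atTop (nhds δ))
    (ν : ℕ → Measure (Fin (m + 1) → ℝ))
    (hνprob : ∀ n, IsProbabilityMeasure (ν n))
    (hweak : ∀ f : BoundedContinuousFunction (Fin (m + 1) → ℝ) ℝ,
      Tendsto (fun n => ∫ x, f x ∂(ν n)) atTop (nhds (∫ x, f x ∂(limitLaw m σ)))) :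
    Tendsto
      (fun n => ((ν n) {x | (x (Fin.last m) + δseq n - sMean (fun j : Fin m => x j.castSucc)) ^ 2 >
          c ^ 2 * sVar (fun j : Fin m => x j.castSucc)}).toReal)
      atTop
      (nhds (((limitLaw m σ) {x | (x (Fin.last m) + δ - sMean (fun j : Fin m => x j.castSucc)) ^ 2 >
          c ^ 2 * sVar (fun j : Fin m => x j.castSucc)}).toReal)) := by
  classical
  haveI hPL : IsProbabilityMeasure (limitLaw m σ) := by
    unfold limitLaw
    exact @Measure.pi.instIsProbabilityMeasure _ _ _ _ _ (fun i => instIsProbabilityMeasureGaussianReal 0 _)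
  haveI : ∀ n, IsProbabilityMeasure (ν n) := hνprob
  set A : Set (Fin (m+1) → ℝ) :=
    {x | (x (Fin.last m) + δ - sMean (fun j : Fin m => x j.castSucc)) ^ 2 >
      c ^ 2 * sVar (fun j : Fin m => x j.castSucc)} with hA
  have hAeq : A = gfun m c δ ⁻¹' Set.Ioi 0 := by
    ext x
    simp only [hA, Set.mem_setOf_eq, Set.mem_preimage, Set.mem_Ioi, gfun, gt_iff_lt, sub_pos]
  have hAopen : IsOpen A := by
    rw [hAeq]; exact isOpen_Ioi.preimage (continuous_gfun m c δ)
  have hAm : MeasurableSet A := hAopen.measurableSet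
  -- the shift maps
  set T : ℕ → (Fin (m+1) → ℝ) → (Fin (m+1) → ℝ) :=
    fun n x => Function.update x (Fin.last m) (x (Fin.last m) + (δseq n - δ)) with hT
  have hT_last : ∀ n x, T n x (Fin.last m) = x (Fin.last m) + (δseq n - δ) :=
    fun n x => Function.update_self _ _ _
  have hT_coord : ∀ n (i : Fin (m+1)), i ≠ Fin.last m → ∀ x, T n x i = x i :=
    fun n i hi x => Function.update_of_ne hi _ _
  have hT_cast : ∀ n x (i : Fin m), T n x i.castSucc = x i.castSucc :=
    fun n x i => hT_coord n i.castSucc (Fin.castSucc_lt_last i).ne x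
  have hTcont : ∀ n, Continuous (T n) := by
    intro n
    apply continuous_pi
    intro i
    rcases eq_or_ne i (Fin.last m) with rfl | h
    · have : (fun x : Fin (m+1) → ℝ => T n x (Fin.last m))
          = fun x => x (Fin.last m) + (δseq n - δ) := funext fun x => hT_last n x
      rw [this]
      exact (continuous_apply _).add continuous_const
    · have : (fun x : Fin (m+1) → ℝ => T n x i) = fun x => x i :=
        funext fun x => hT_coord n i h x
      rw [this]
      exact continuous_apply i
  have hTmeas : ∀ n, Measurable (T n) := fun n => (hTcont n).measurable
  set μs : ℕ → Measure (Fin (m+1) → ℝ) := fun n => (ν n).map (T n) with hμs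
  haveI : ∀ n, IsProbabilityMeasure (μs n) :=
    fun n => Measure.isProbabilityMeasure_map (hTmeas n).aemeasurable
  have hμsA : ∀ n, μs n A
      = ν n {x | (x (Fin.last m) + δseq n - sMean (fun j : Fin m => x j.castSucc)) ^ 2 >
          c ^ 2 * sVar (fun j : Fin m => x j.castSucc)} := by
    intro n
    rw [hμs]
    rw [Measure.map_apply (hTmeas n) hAm]
    congr 1
    ext x
    have hfn : (fun j : Fin m => T n x j.castSucc) = fun j => x j.castSucc :=
      funext fun j => hT_cast n x j
    simp only [Set.mem_preimage, hA, Set.mem_setOf_eq, hT_last, hfn]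
    have harith : x (Fin.last m) + (δseq n - δ) + δ = x (Fin.last m) + δseq n := by ring
    rw [harith]
  -- weak convergence of ν as probability measures
  set νP : ℕ → ProbabilityMeasure (Fin (m+1) → ℝ) := fun n => ⟨ν n, hνprob n⟩ with hνP
  set LP : ProbabilityMeasure (Fin (m+1) → ℝ) := ⟨limitLaw m σ, hPL⟩ with hLP
  have hνlim : Tendsto νP atTop (𝓝 LP) := by
    rw [ProbabilityMeasure.tendsto_iff_forall_integral_tendsto]
    exact hweak
  -- limsup bound on closed sets for the shifted measures
  have h_closeds : ∀ F, IsClosed F →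
      (Filter.limsup (fun n => μs n F) atTop) ≤ limitLaw m σ F := by
    intro F hF
    have key : ∀ ε : ℝ, 0 < ε →
        Filter.limsup (fun n => μs n F) atTop
          ≤ limitLaw m σ (Metric.cthickening ε F) := by
      intro ε hε
      have hd : ∀ᶠ n in atTop, |δseq n - δ| ≤ ε := by
        have h1 := hδ.eventually (Metric.closedBall_mem_nhds δ hε)
        filter_upwards [h1] with n hn
        simpa [Real.dist_eq] using hn
      have hev : ∀ᶠ n in atTop, μs n F ≤ ν n (Metric.cthickening ε F) := by
        filter_upwards [hd] with n hn
        rw [hμs, Measure.map_apply (hTmeas n) hF.measurableSet]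
        apply measure_mono
        intro x hx
        refine Metric.mem_cthickening_of_dist_le x (T n x) ε F hx ?_
        rw [dist_pi_le_iff hε.le]
        intro i
        rcases eq_or_ne i (Fin.last m) with rfl | h
        · rw [hT_last]
          have h2 : x (Fin.last m) - (x (Fin.last m) + (δseq n - δ)) = -(δseq n - δ) := by
            ring
          rw [Real.dist_eq, h2, abs_neg]
          exact hn
        · rw [hT_coord n i h]
          simpa using hε.le
      calc Filter.limsup (fun n => μs n F) atTop
          ≤ Filter.limsup (fun n => ν n (Metric.cthickening ε F)) atTop :=
            Filter.limsup_le_limsup hev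
        _ ≤ limitLaw m σ (Metric.cthickening ε F) :=
            ProbabilityMeasure.limsup_measure_closed_le_of_tendsto hνlim
              Metric.isClosed_cthickening
    have htend : Tendsto (fun r : ℝ => limitLaw m σ (Metric.cthickening r F))
        (nhdsWithin 0 (Set.Ioi 0)) (𝓝 (limitLaw m σ F)) :=
      (tendsto_measure_cthickening_of_isClosed
        ⟨1, one_pos, measure_ne_top _ _⟩ hF).mono_left nhdsWithin_le_nhds
    refine ge_of_tendsto htend ?_
    filter_upwards [self_mem_nhdsWithin] with ε hε
    exact key ε hε
  have h_opens := limsup_measure_closed_le_iff_liminf_measure_open_ge.mp h_closeds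
  -- null frontier
  have hfr : limitLaw m σ (frontier A) = 0 := by
    have h1 : frontier A ⊆ {x | gfun m c δ x = 0} := by
      rw [hAeq]
      refine ((continuous_gfun m c δ).frontier_preimage_subset (Set.Ioi 0)).trans ?_
      rw [frontier_Ioi]
      intro x hx
      exact hx
    exact measure_mono_null h1 (limitLaw_null_Z m hm c hc hc' σ hσne δ)
  have hmain : Tendsto (fun n => μs n A) atTop (𝓝 (limitLaw m σ A)) :=
    tendsto_measure_of_null_frontier h_opens hfr
  have hfinal : Tendsto (fun n => (μs n A).toReal) atTop
      (𝓝 ((limitLaw m σ A).toReal)) :=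
    (ENNReal.tendsto_toReal (measure_ne_top _ _)).comp hmain
  have hfuneq : (fun n => ((ν n)
      {x | (x (Fin.last m) + δseq n - sMean (fun j : Fin m => x j.castSucc)) ^ 2 >
        c ^ 2 * sVar (fun j : Fin m => x j.castSucc)}).toReal)
      = fun n => (μs n A).toReal := funext fun n => by rw [hμsA n]
  rw [hfuneq]
  exact hfinal
end

section
/- Let m ≥ 2, k ∈ {1, …, m}, ρ ≥ 0, and c > 0 with c ≠ m^{-1/2}. Then the supremum of the null rejection probability over the relative-heterogeneity set is attained: there exists σ* ∈ S_m(k,ρ) such that p_c(σ*) = sup_{σ ∈ S_m(k,ρ)} p_c(σ). -/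
open MeasureTheory ProbabilityTheory Filter

/-- The null rejection probability `p_c(σ)` of the `t`-test, where
`ξ_1, …, ξ_{m+1}` are i.i.d. standard normal. -/
noncomputable def rejProb (m : ℕ) (c : ℝ) (σ : Fin (m + 1) → ℝ) : ℝ :=
  ((Measure.pi (fun _ : Fin (m + 1) => gaussianReal 0 1))
    {ξ | (σ (Fin.last m) * ξ (Fin.last m) -
        (m : ℝ)⁻¹ * ∑ i : Fin m, σ i.castSucc * ξ i.castSucc) ^ 2 >
      c ^ 2 * ((m : ℝ) - 1)⁻¹ *
        ∑ j : Fin m, (σ j.castSucc * ξ j.castSucc -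
          (m : ℝ)⁻¹ * ∑ i : Fin m, σ i.castSucc * ξ i.castSucc) ^ 2}).toReal

/-- The `i`-th smallest value (0-indexed) among `y_1, …, y_m`. -/
noncomputable def sortedVal (m : ℕ) (y : Fin m → ℝ) (i : Fin m) : ℝ := y (Tuple.sort y i)

/-- The relative-heterogeneity set `S_m(k, ρ)`; here `kk : Fin m` encodes the rank
`k = kk + 1 ∈ {1, …, m}`. -/
noncomputable def hetSet (m : ℕ) (kk : Fin m) (ρ : ℝ) : Set (Fin (m + 1) → ℝ) :=
  {σ | (∀ j, 0 ≤ σ j) ∧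
    σ (Fin.last m) ≤ ρ * sortedVal m (fun j : Fin m => σ j.castSucc) kk}

/-- The quadratic form whose positivity defines the rejection event. -/
noncomputable def Qf (m : ℕ) (c : ℝ) (σ ξ : Fin (m + 1) → ℝ) : ℝ :=
  (σ (Fin.last m) * ξ (Fin.last m) -
      (m : ℝ)⁻¹ * ∑ i : Fin m, σ i.castSucc * ξ i.castSucc) ^ 2 -
    c ^ 2 * ((m : ℝ) - 1)⁻¹ *
      ∑ j : Fin m, (σ j.castSucc * ξ j.castSucc -
        (m : ℝ)⁻¹ * ∑ i : Fin m, σ i.castSucc * ξ i.castSucc) ^ 2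

lemma sum_affine {m : ℕ} (a b : Fin m → ℝ) (t : ℝ) :
    ∑ j : Fin m, (a j + t * b j) = (∑ j, a j) + t * ∑ j, b j := by
  rw [Finset.mul_sum, ← Finset.sum_add_distrib]

lemma sum_sq_affine {m : ℕ} (a b : Fin m → ℝ) (t : ℝ) :
    ∑ j : Fin m, (a j + t * b j) ^ 2 =
      (∑ j, (a j) ^ 2) + t * (2 * ∑ j, a j * b j) + t ^ 2 * ∑ j, (b j) ^ 2 := by
  rw [Finset.mul_sum, Finset.mul_sum, Finset.mul_sum, ← Finset.sum_add_distrib,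
    ← Finset.sum_add_distrib]
  exact Finset.sum_congr rfl fun j _ => by ring

lemma Qf_add_smul (m : ℕ) (c : ℝ) (σ u v : Fin (m + 1) → ℝ) (t : ℝ) :
    Qf m c σ (fun i => u i + t * v i) =
      Qf m c σ u +
        t * (Qf m c σ (fun i => u i + v i) - Qf m c σ u - Qf m c σ v) +
        t ^ 2 * Qf m c σ v := by
  have hS : ∀ s : ℝ, (∑ i : Fin m, σ i.castSucc * (u i.castSucc + s * v i.castSucc)) =
      (∑ i : Fin m, σ i.castSucc * u i.castSucc) +
        s * ∑ i : Fin m, σ i.castSucc * v i.castSucc := by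
    intro s
    rw [Finset.mul_sum, ← Finset.sum_add_distrib]
    exact Finset.sum_congr rfl fun j _ => by ring
  set Su := ∑ i : Fin m, σ i.castSucc * u i.castSucc with hSu
  set Sv := ∑ i : Fin m, σ i.castSucc * v i.castSucc with hSv
  set Pu := ∑ j : Fin m, (σ j.castSucc * u j.castSucc - (m : ℝ)⁻¹ * Su) ^ 2 with hPu
  set Pv := ∑ j : Fin m, (σ j.castSucc * v j.castSucc - (m : ℝ)⁻¹ * Sv) ^ 2 with hPv
  set R := ∑ j : Fin m, (σ j.castSucc * u j.castSucc - (m : ℝ)⁻¹ * Su) *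
      (σ j.castSucc * v j.castSucc - (m : ℝ)⁻¹ * Sv) with hR
  have hT : ∀ s : ℝ,
      (∑ j : Fin m, (σ j.castSucc * (u j.castSucc + s * v j.castSucc) -
        (m : ℝ)⁻¹ * (Su + s * Sv)) ^ 2) = Pu + s * (2 * R) + s ^ 2 * Pv := by
    intro s
    rw [hPu, hPv, hR, ← sum_sq_affine (fun j => σ j.castSucc * u j.castSucc - (m : ℝ)⁻¹ * Su)
      (fun j => σ j.castSucc * v j.castSucc - (m : ℝ)⁻¹ * Sv) s]
    exact Finset.sum_congr rfl fun j _ => by ring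
  have key : ∀ s : ℝ, Qf m c σ (fun i => u i + s * v i) =
      ((σ (Fin.last m) * u (Fin.last m) - (m : ℝ)⁻¹ * Su) ^ 2 - c ^ 2 * ((m : ℝ) - 1)⁻¹ * Pu)
      + s * (2 * (σ (Fin.last m) * u (Fin.last m) - (m : ℝ)⁻¹ * Su) *
          (σ (Fin.last m) * v (Fin.last m) - (m : ℝ)⁻¹ * Sv)
          - c ^ 2 * ((m : ℝ) - 1)⁻¹ * (2 * R))
      + s ^ 2 * ((σ (Fin.last m) * v (Fin.last m) - (m : ℝ)⁻¹ * Sv) ^ 2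
          - c ^ 2 * ((m : ℝ) - 1)⁻¹ * Pv) := by
    intro s
    simp only [Qf, hS, hT]
    ring
  have hu : Qf m c σ u =
      (σ (Fin.last m) * u (Fin.last m) - (m : ℝ)⁻¹ * Su) ^ 2
        - c ^ 2 * ((m : ℝ) - 1)⁻¹ * Pu := by
    have := key 0
    simpa using this
  have hv : Qf m c σ v =
      (σ (Fin.last m) * v (Fin.last m) - (m : ℝ)⁻¹ * Sv) ^ 2
        - c ^ 2 * ((m : ℝ) - 1)⁻¹ * Pv := by
    rw [Qf, hSv, hPv]
  have huv : Qf m c σ (fun i => u i + v i) =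
      ((σ (Fin.last m) * u (Fin.last m) - (m : ℝ)⁻¹ * Su) ^ 2 - c ^ 2 * ((m : ℝ) - 1)⁻¹ * Pu)
      + (2 * (σ (Fin.last m) * u (Fin.last m) - (m : ℝ)⁻¹ * Su) *
          (σ (Fin.last m) * v (Fin.last m) - (m : ℝ)⁻¹ * Sv)
          - c ^ 2 * ((m : ℝ) - 1)⁻¹ * (2 * R))
      + ((σ (Fin.last m) * v (Fin.last m) - (m : ℝ)⁻¹ * Sv) ^ 2
          - c ^ 2 * ((m : ℝ) - 1)⁻¹ * Pv) := by
    have := key 1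
    simpa using this
  rw [key t, hu, hv, huv]
  ring

lemma update_as_line {m : ℕ} (ξ : Fin (m + 1) → ℝ) (j0 : Fin (m + 1)) (t : ℝ) :
    Function.update ξ j0 t = fun i =>
      Function.update ξ j0 0 i + t * Function.update (0 : Fin (m + 1) → ℝ) j0 1 i := by
  funext i
  rcases eq_or_ne i j0 with rfl | h
  · simp
  · simp [Function.update_of_ne h]

lemma Qf_update (m : ℕ) (c : ℝ) (σ ξ : Fin (m + 1) → ℝ) (j0 : Fin (m + 1)) (t : ℝ) :
    Qf m c σ (Function.update ξ j0 t) =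
      Qf m c σ (Function.update ξ j0 0) +
        t * (Qf m c σ (Function.update ξ j0 1) - Qf m c σ (Function.update ξ j0 0) -
          Qf m c σ (Function.update (0 : Fin (m + 1) → ℝ) j0 1)) +
        t ^ 2 * Qf m c σ (Function.update (0 : Fin (m + 1) → ℝ) j0 1) := by
  have h1 : Function.update ξ j0 1 = fun i =>
      Function.update ξ j0 0 i + Function.update (0 : Fin (m + 1) → ℝ) j0 1 i := by
    have := update_as_line ξ j0 1
    simpa using this
  rw [update_as_line ξ j0 t, Qf_add_smul, ← h1]

lemma quad_roots_finite {α β γ : ℝ} (hα : α ≠ 0) :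
    {t : ℝ | γ + t * β + t ^ 2 * α = 0}.Finite := by
  have hp : (Polynomial.C γ + Polynomial.C β * Polynomial.X +
      Polynomial.C α * Polynomial.X ^ 2) ≠ 0 := by
    intro h
    have := congrArg (fun p => Polynomial.coeff p 2) h
    simp at this
    exact hα this
  have := Polynomial.finite_setOf_isRoot hp
  refine this.subset ?_
  intro t ht
  simp only [Set.mem_setOf_eq, Polynomial.IsRoot, Polynomial.eval_add, Polynomial.eval_mul,
    Polynomial.eval_C, Polynomial.eval_X, Polynomial.eval_pow]
  simp only [Set.mem_setOf_eq] at ht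
  linarith [ht]

lemma slice_finite {m : ℕ} {c : ℝ} {σ : Fin (m + 1) → ℝ} {j0 : Fin (m + 1)}
    (hα : Qf m c σ (Function.update (0 : Fin (m + 1) → ℝ) j0 1) ≠ 0)
    (ξ : Fin (m + 1) → ℝ) :
    {t : ℝ | Qf m c σ (Function.update ξ j0 t) = 0}.Finite := by
  have := quad_roots_finite (γ := Qf m c σ (Function.update ξ j0 0))
    (β := Qf m c σ (Function.update ξ j0 1) - Qf m c σ (Function.update ξ j0 0) -
      Qf m c σ (Function.update (0 : Fin (m + 1) → ℝ) j0 1))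
    (α := Qf m c σ (Function.update (0 : Fin (m + 1) → ℝ) j0 1)) hα
  refine this.subset fun t ht => ?_
  simp only [Set.mem_setOf_eq] at ht ⊢
  rw [Qf_update] at ht
  linarith [ht]

lemma Qf_dir_last {m : ℕ} (c : ℝ) (σ : Fin (m + 1) → ℝ) :
    Qf m c σ (Function.update (0 : Fin (m + 1) → ℝ) (Fin.last m) 1) =
      σ (Fin.last m) ^ 2 := by
  have h0 : ∀ i : Fin m,
      Function.update (0 : Fin (m + 1) → ℝ) (Fin.last m) 1 i.castSucc = 0 := by
    intro i
    rw [Function.update_of_ne (Fin.castSucc_lt_last i).ne]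
    rfl
  simp [Qf, h0]

lemma Qf_dir_castSucc {m : ℕ} (hm : 2 ≤ m) {c : ℝ} (hc : 0 < c)
    (hc' : c ≠ (Real.sqrt m)⁻¹) (σ : Fin (m + 1) → ℝ) (j : Fin m)
    (hσj : σ j.castSucc ≠ 0) :
    Qf m c σ (Function.update (0 : Fin (m + 1) → ℝ) j.castSucc 1) ≠ 0 := by
  have hm0 : (m : ℝ) ≠ 0 := by positivity
  have hm1 : (m : ℝ) - 1 ≠ 0 := by
    have : (2 : ℝ) ≤ m := by exact_mod_cast hm
    nlinarith
  set δ := Function.update (0 : Fin (m + 1) → ℝ) j.castSucc 1 with hδ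
  have hlast : δ (Fin.last m) = 0 := by
    rw [hδ, Function.update_of_ne (Fin.castSucc_lt_last j).ne']
    rfl
  have happ : ∀ i : Fin m, δ i.castSucc = if i = j then 1 else 0 := by
    intro i
    rcases eq_or_ne i j with rfl | h
    · simp [hδ]
    · rw [hδ, Function.update_of_ne (by simpa [Fin.castSucc_inj] using h)]
      simp [h]
  have hS : (∑ i : Fin m, σ i.castSucc * δ i.castSucc) = σ j.castSucc := by
    rw [Finset.sum_congr rfl fun i _ => by rw [happ i]]
    rw [Finset.sum_congr rfl fun i (_ : i ∈ Finset.univ) =>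
      (by split_ifs with h <;> simp [h] : σ i.castSucc * (if i = j then (1:ℝ) else 0) =
        if i = j then σ j.castSucc else 0)]
    simp
  have hsum : (∑ i : Fin m, (σ i.castSucc * δ i.castSucc -
      (m : ℝ)⁻¹ * σ j.castSucc) ^ 2) =
      (σ j.castSucc - (m : ℝ)⁻¹ * σ j.castSucc) ^ 2 +
        ((m : ℝ) - 1) * ((m : ℝ)⁻¹ * σ j.castSucc) ^ 2 := by
    set A := (σ j.castSucc - (m : ℝ)⁻¹ * σ j.castSucc) ^ 2 with hA
    set B := ((m : ℝ)⁻¹ * σ j.castSucc) ^ 2 with hB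
    have h1 : ∀ i : Fin m, (σ i.castSucc * δ i.castSucc - (m : ℝ)⁻¹ * σ j.castSucc) ^ 2 =
        B + if i = j then A - B else 0 := by
      intro i
      rw [happ i]
      split_ifs with h
      · subst h; rw [hA, hB]; ring
      · rw [hB]; ring
    rw [Finset.sum_congr rfl fun i _ => h1 i, Finset.sum_add_distrib,
      Finset.sum_const, Finset.sum_ite_eq' Finset.univ j fun _ => A - B]
    simp only [Finset.card_univ, Fintype.card_fin, Finset.mem_univ, if_true, nsmul_eq_mul]
    ring
  have hval : Qf m c σ δ = σ j.castSucc ^ 2 * (1 - m * c ^ 2) / m ^ 2 := by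
    rw [Qf, hlast, hS, hsum]
    field_simp
    ring
  rw [hval]
  have h1mc : 1 - (m : ℝ) * c ^ 2 ≠ 0 := by
    intro h
    apply hc'
    have hc2 : c ^ 2 = (m : ℝ)⁻¹ := by
      field_simp at h ⊢
      linarith
    have : c = Real.sqrt (c ^ 2) := (Real.sqrt_sq hc.le).symm
    rw [hc2] at this
    rw [this, ← Real.sqrt_inv]
  exact div_ne_zero (mul_ne_zero (pow_ne_zero _ hσj) h1mc) (pow_ne_zero _ hm0)

lemma continuous_Qf_xi (m : ℕ) (c : ℝ) (σ : Fin (m + 1) → ℝ) :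
    Continuous (fun ξ => Qf m c σ ξ) := by
  unfold Qf
  fun_prop

lemma continuous_Qf_sigma (m : ℕ) (c : ℝ) (ξ : Fin (m + 1) → ℝ) :
    Continuous (fun σ => Qf m c σ ξ) := by
  unfold Qf
  fun_prop

lemma null_zero_set (m : ℕ) (c : ℝ) (σ : Fin (m + 1) → ℝ) (j0 : Fin (m + 1))
    (hfin : ∀ ξ : Fin (m + 1) → ℝ,
      {t : ℝ | Qf m c σ (Function.update ξ j0 t) = 0}.Finite) :
    Measure.pi (fun _ : Fin (m + 1) => gaussianReal 0 1) {ξ | Qf m c σ ξ = 0} = 0 := by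
  set Z : Set (Fin (m + 1) → ℝ) := {ξ | Qf m c σ ξ = 0} with hZdef
  have hZ : MeasurableSet Z :=
    (continuous_Qf_xi m c σ).measurable (measurableSet_singleton 0)
  set e := MeasurableEquiv.piFinSuccAbove (fun _ : Fin (m + 1) => ℝ) j0 with he
  have hmp := measurePreserving_piFinSuccAbove (fun _ : Fin (m + 1) => gaussianReal 0 1) j0
  set s := e.symm ⁻¹' Z with hs0
  have hs : MeasurableSet s := e.symm.measurable hZ
  have h1 : Z = e ⁻¹' s := by
    rw [hs0, Set.preimage_preimage]
    simp
  rw [h1, hmp.measure_preimage_equiv]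
  rw [← Measure.prod_swap, Measure.map_apply measurable_swap hs,
    Measure.measure_prod_null (measurable_swap hs)]
  refine Filter.Eventually.of_forall fun rest => ?_
  have hset : (Prod.mk rest ⁻¹' (Prod.swap ⁻¹' s)) =
      {t : ℝ | Qf m c σ (Function.update (j0.insertNth 0 rest) j0 t) = 0} := by
    ext t
    simp only [Set.mem_preimage, Prod.swap_prod_mk, hs0, Set.mem_setOf_eq, hZdef,
      Fin.update_insertNth]
    have : e.symm (t, rest) = j0.insertNth t rest := by
      simp [he, MeasurableEquiv.piFinSuccAbove, Fin.insertNthEquiv]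
    rw [this]
  simp only [Pi.zero_apply]
  rw [hset]
  exact (gaussianReal_absolutelyContinuous 0 one_ne_zero)
    ((hfin (j0.insertNth 0 rest)).measure_zero volume)

lemma exists_subset_sorted (m : ℕ) (y : Fin m → ℝ) (kk : Fin m) :
    ∃ A : Finset (Fin m), A.card = m - (kk : ℕ) ∧ ∀ i ∈ A, sortedVal m y kk ≤ y i := by
  refine ⟨(Finset.Ici kk).image (Tuple.sort y), ?_, ?_⟩
  · rw [Finset.card_image_of_injective _ (Equiv.injective _), Fin.card_Ici]
  · intro i hi
    obtain ⟨j, hj, rfl⟩ := Finset.mem_image.mp hi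
    exact Tuple.monotone_sort y (Finset.mem_Ici.mp hj)

lemma exists_le_sorted (m : ℕ) (y : Fin m → ℝ) (kk : Fin m) (A : Finset (Fin m))
    (hA : A.card = m - (kk : ℕ)) : ∃ i ∈ A, y i ≤ sortedVal m y kk := by
  by_contra h
  push_neg at h
  set B := (Finset.Iic kk).image (Tuple.sort y) with hB
  have hBcard : B.card = (kk : ℕ) + 1 := by
    rw [hB, Finset.card_image_of_injective _ (Equiv.injective _), Fin.card_Iic]
  have hdisj : Disjoint A B := by
    rw [Finset.disjoint_left]
    intro i hiA hiB
    obtain ⟨j, hj, rfl⟩ := Finset.mem_image.mp hiB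
    have h1 : y (Tuple.sort y j) ≤ sortedVal m y kk :=
      Tuple.monotone_sort y (Finset.mem_Iic.mp hj)
    exact absurd h1 (not_le.mpr (h _ hiA))
  have hcard : (A ∪ B).card ≤ m := by
    simpa using Finset.card_le_univ (A ∪ B)
  rw [Finset.card_union_of_disjoint hdisj, hA, hBcard] at hcard
  have := kk.isLt
  omega

lemma hetSet_eq_union (m : ℕ) (kk : Fin m) (ρ : ℝ) (hρ : 0 ≤ ρ) :
    hetSet m kk ρ = ⋃ A ∈ {A : Finset (Fin m) | A.card = m - (kk : ℕ)},
      {σ : Fin (m + 1) → ℝ | (∀ j, 0 ≤ σ j) ∧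
        ∀ i ∈ A, σ (Fin.last m) ≤ ρ * σ i.castSucc} := by
  ext σ
  simp only [Set.mem_iUnion, Set.mem_setOf_eq, exists_prop]
  constructor
  · rintro ⟨h1, h2⟩
    obtain ⟨A, hAcard, hAge⟩ := exists_subset_sorted m (fun j => σ j.castSucc) kk
    exact ⟨A, hAcard, h1, fun i hi =>
      h2.trans (mul_le_mul_of_nonneg_left (hAge i hi) hρ)⟩
  · rintro ⟨A, hAcard, h1, h2⟩
    obtain ⟨i, hi, hle⟩ := exists_le_sorted m (fun j => σ j.castSucc) kk A hAcard
    exact ⟨h1, (h2 i hi).trans (mul_le_mul_of_nonneg_left hle hρ)⟩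

lemma isClosed_hetSet (m : ℕ) (kk : Fin m) (ρ : ℝ) (hρ : 0 ≤ ρ) :
    IsClosed (hetSet m kk ρ) := by
  rw [hetSet_eq_union m kk ρ hρ]
  refine Set.Finite.isClosed_biUnion (Set.toFinite _) fun A _ => ?_
  have : {σ : Fin (m + 1) → ℝ | (∀ j, 0 ≤ σ j) ∧
      ∀ i ∈ A, σ (Fin.last m) ≤ ρ * σ i.castSucc} =
      (⋂ j, {σ : Fin (m + 1) → ℝ | 0 ≤ σ j}) ∩
        ⋂ i ∈ A, {σ : Fin (m + 1) → ℝ | σ (Fin.last m) ≤ ρ * σ i.castSucc} := by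
    ext σ
    simp [Set.mem_iInter]
  rw [this]
  refine IsClosed.inter (isClosed_iInter fun j =>
      isClosed_le continuous_const (continuous_apply j)) ?_
  exact isClosed_biInter fun i _ =>
    isClosed_le (continuous_apply _) (continuous_const.mul (continuous_apply _))

lemma sortedVal_smul (m : ℕ) {r : ℝ} (hr : 0 ≤ r) (y : Fin m → ℝ) (kk : Fin m) :
    sortedVal m (fun j => r * y j) kk = r * sortedVal m y kk := by
  have hmono : Monotone ((fun j => r * y j) ∘ Tuple.sort y) := by
    intro a b hab
    exact mul_le_mul_of_nonneg_left (Tuple.monotone_sort y hab) hr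
  have h := Tuple.comp_sort_eq_comp_iff_monotone.mpr hmono
  calc sortedVal m (fun j => r * y j) kk
      = ((fun j => r * y j) ∘ Tuple.sort (fun j => r * y j)) kk := rfl
    _ = ((fun j => r * y j) ∘ Tuple.sort y) kk := by rw [h]
    _ = r * sortedVal m y kk := rfl

lemma hetSet_smul (m : ℕ) (kk : Fin m) (ρ : ℝ) {r : ℝ} (hr : 0 ≤ r)
    {σ : Fin (m + 1) → ℝ} (hσ : σ ∈ hetSet m kk ρ) :
    (fun i => r * σ i) ∈ hetSet m kk ρ := by
  obtain ⟨h1, h2⟩ := hσ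
  refine ⟨fun j => mul_nonneg hr (h1 j), ?_⟩
  have := sortedVal_smul m hr (fun j => σ j.castSucc) kk
  simp only [Set.mem_setOf_eq]
  rw [this]
  calc r * σ (Fin.last m) ≤ r * (ρ * sortedVal m (fun j => σ j.castSucc) kk) :=
        mul_le_mul_of_nonneg_left h2 hr
    _ = ρ * (r * sortedVal m (fun j => σ j.castSucc) kk) := by ring

lemma rejProb_eq (m : ℕ) (c : ℝ) (σ : Fin (m + 1) → ℝ) :
    rejProb m c σ = ((Measure.pi (fun _ : Fin (m + 1) => gaussianReal 0 1))
      {ξ | 0 < Qf m c σ ξ}).toReal := by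
  rw [rejProb]
  have hset : {ξ : Fin (m + 1) → ℝ | (σ (Fin.last m) * ξ (Fin.last m) -
        (m : ℝ)⁻¹ * ∑ i : Fin m, σ i.castSucc * ξ i.castSucc) ^ 2 >
      c ^ 2 * ((m : ℝ) - 1)⁻¹ *
        ∑ j : Fin m, (σ j.castSucc * ξ j.castSucc -
          (m : ℝ)⁻¹ * ∑ i : Fin m, σ i.castSucc * ξ i.castSucc) ^ 2} =
      {ξ : Fin (m + 1) → ℝ | 0 < Qf m c σ ξ} := by
    ext ξ
    simp [Qf, sub_pos, gt_iff_lt]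
  rw [hset]

lemma Qf_smul (m : ℕ) (c : ℝ) (σ ξ : Fin (m + 1) → ℝ) (r : ℝ) :
    Qf m c (fun i => r * σ i) ξ = r ^ 2 * Qf m c σ ξ := by
  unfold Qf
  set S := ∑ i : Fin m, σ i.castSucc * ξ i.castSucc with hSdef
  have hS : (∑ i : Fin m, r * σ i.castSucc * ξ i.castSucc) = r * S := by
    rw [hSdef, Finset.mul_sum]
    exact Finset.sum_congr rfl fun i _ => by ring
  rw [hS]
  have hT : (∑ j : Fin m, (r * σ j.castSucc * ξ j.castSucc -
      (m : ℝ)⁻¹ * (r * S)) ^ 2) =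
      r ^ 2 * ∑ j : Fin m, (σ j.castSucc * ξ j.castSucc - (m : ℝ)⁻¹ * S) ^ 2 := by
    calc (∑ j : Fin m, (r * σ j.castSucc * ξ j.castSucc -
        (m : ℝ)⁻¹ * (r * S)) ^ 2) =
        ∑ j : Fin m, r ^ 2 * (σ j.castSucc * ξ j.castSucc - (m : ℝ)⁻¹ * S) ^ 2 :=
          Finset.sum_congr rfl fun j _ => by ring
      _ = r ^ 2 * ∑ j : Fin m, (σ j.castSucc * ξ j.castSucc - (m : ℝ)⁻¹ * S) ^ 2 :=
          (Finset.mul_sum _ _ _).symm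
  rw [hT]
  ring

lemma rejProb_smul (m : ℕ) (c : ℝ) (σ : Fin (m + 1) → ℝ) {r : ℝ} (hr : 0 < r) :
    rejProb m c (fun i => r * σ i) = rejProb m c σ := by
  rw [rejProb_eq, rejProb_eq]
  have hset : {ξ : Fin (m + 1) → ℝ | 0 < Qf m c (fun i => r * σ i) ξ} =
      {ξ : Fin (m + 1) → ℝ | 0 < Qf m c σ ξ} := by
    ext ξ
    simp only [Set.mem_setOf_eq, Qf_smul]
    constructor
    · intro h
      nlinarith [sq_nonneg r]
    · intro h
      positivity
  rw [hset]

lemma rejProb_nonneg (m : ℕ) (c : ℝ) (σ : Fin (m + 1) → ℝ) : 0 ≤ rejProb m c σ :=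
  ENNReal.toReal_nonneg

lemma rejProb_zero (m : ℕ) (c : ℝ) : rejProb m c (fun _ => 0) = 0 := by
  rw [rejProb_eq]
  have : {ξ : Fin (m + 1) → ℝ | 0 < Qf m c (fun _ => 0) ξ} = ∅ := by
    ext ξ
    simp [Qf]
  rw [this]
  simp

lemma rejProb_continuousOn (m : ℕ) (c : ℝ) (K : Set (Fin (m + 1) → ℝ))
    (hK : ∀ σ ∈ K, Measure.pi (fun _ : Fin (m + 1) => gaussianReal 0 1)
      {ξ | Qf m c σ ξ = 0} = 0) :
    ContinuousOn (rejProb m c) K := by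
  set μpi := Measure.pi (fun _ : Fin (m + 1) => gaussianReal 0 1) with hμpi
  have hmeas : ∀ τ : Fin (m + 1) → ℝ, MeasurableSet {ξ : Fin (m + 1) → ℝ | 0 < Qf m c τ ξ} :=
    fun τ => measurableSet_lt measurable_const (continuous_Qf_xi m c τ).measurable
  have hrepr : ∀ τ : Fin (m + 1) → ℝ, rejProb m c τ =
      ∫ ξ, Set.indicator {ξ : Fin (m + 1) → ℝ | 0 < Qf m c τ ξ} (1 : (Fin (m + 1) → ℝ) → ℝ) ξ ∂μpi := by
    intro τ
    rw [rejProb_eq, integral_indicator_one (hmeas τ)]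
    rfl
  intro σ hσ
  rw [ContinuousWithinAt]
  have key : Tendsto (fun τ => ∫ ξ,
      Set.indicator {ξ : Fin (m + 1) → ℝ | 0 < Qf m c τ ξ} (1 : (Fin (m + 1) → ℝ) → ℝ) ξ ∂μpi) (nhdsWithin σ K)
      (nhds (∫ ξ, Set.indicator {ξ : Fin (m + 1) → ℝ | 0 < Qf m c σ ξ} (1 : (Fin (m + 1) → ℝ) → ℝ) ξ ∂μpi)) := by
    refine tendsto_integral_filter_of_dominated_convergence (fun _ => (1 : ℝ))
      (Eventually.of_forall fun τ =>
        (measurable_one.indicator (hmeas τ)).aestronglyMeasurable)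
      (Eventually.of_forall fun τ => Eventually.of_forall fun ξ => ?_)
      (integrable_const 1) ?_
    · by_cases hξ : ξ ∈ {ξ : Fin (m + 1) → ℝ | 0 < Qf m c τ ξ}
      · simp [Set.indicator_of_mem hξ]
      · simp [Set.indicator_of_notMem hξ]
    · have hae : ∀ᵐ ξ ∂μpi, ξ ∉ {ξ : Fin (m + 1) → ℝ | Qf m c σ ξ = 0} :=
        measure_eq_zero_iff_ae_notMem.mp (hK σ hσ)
      filter_upwards [hae] with ξ hξ
      have hne : Qf m c σ ξ ≠ 0 := hξ
      rcases hne.lt_or_gt with hneg | hpos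
      · have hev : ∀ᶠ τ in nhds σ, Qf m c τ ξ < 0 :=
          ((continuous_Qf_sigma m c ξ).tendsto σ).eventually (eventually_lt_nhds hneg)
        have hev' : ∀ᶠ τ in nhdsWithin σ K, Qf m c τ ξ < 0 :=
          hev.filter_mono nhdsWithin_le_nhds
        have h0 : Set.indicator {ξ : Fin (m + 1) → ℝ | 0 < Qf m c σ ξ} (1 : (Fin (m + 1) → ℝ) → ℝ) ξ = 0 :=
          Set.indicator_of_notMem (by simp only [Set.mem_setOf_eq, not_lt]; linarith) _
        rw [h0]
        refine Tendsto.congr' ?_ tendsto_const_nhds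
        filter_upwards [hev'] with τ hτ
        exact (Set.indicator_of_notMem (s := {ξ : Fin (m + 1) → ℝ | 0 < Qf m c τ ξ}) (by simp only [Set.mem_setOf_eq, not_lt]; linarith) (1 : (Fin (m + 1) → ℝ) → ℝ)).symm
      · have hev : ∀ᶠ τ in nhds σ, 0 < Qf m c τ ξ :=
          ((continuous_Qf_sigma m c ξ).tendsto σ).eventually (eventually_gt_nhds hpos)
        have hev' : ∀ᶠ τ in nhdsWithin σ K, 0 < Qf m c τ ξ :=
          hev.filter_mono nhdsWithin_le_nhds
        have h0 : Set.indicator {ξ : Fin (m + 1) → ℝ | 0 < Qf m c σ ξ} (1 : (Fin (m + 1) → ℝ) → ℝ) ξ = 1 :=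
          Set.indicator_of_mem (show ξ ∈ {ξ : Fin (m + 1) → ℝ | 0 < Qf m c σ ξ} from hpos) _
        rw [h0]
        refine Tendsto.congr' ?_ tendsto_const_nhds
        filter_upwards [hev'] with τ hτ
        exact (Set.indicator_of_mem (show ξ ∈ {ξ : Fin (m + 1) → ℝ | 0 < Qf m c τ ξ} from hτ) (1 : (Fin (m + 1) → ℝ) → ℝ)).symm
  rw [hrepr σ]
  exact key.congr fun τ => (hrepr τ).symm

/-- Lemma (attainment of the supremum of the rejection probability over `S_m(k,ρ)`). -/
theorem stmt3 (m : ℕ) (hm : 2 ≤ m) (k : ℕ) (hk1 : 1 ≤ k) (hk2 : k ≤ m)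
    (ρ : ℝ) (hρ : 0 ≤ ρ) (c : ℝ) (hc : 0 < c) (hc' : c ≠ (Real.sqrt m)⁻¹) :
    ∃ σs ∈ hetSet m ⟨k - 1, by omega⟩ ρ,
      IsGreatest (rejProb m c '' hetSet m ⟨k - 1, by omega⟩ ρ) (rejProb m c σs) := by
  set kk : Fin m := ⟨k - 1, by omega⟩ with hkk
  set D := hetSet m kk ρ with hD
  set K := D ∩ Metric.sphere (0 : Fin (m + 1) → ℝ) 1 with hKdef
  have hDclosed : IsClosed D := isClosed_hetSet m kk ρ hρ
  have hKcomp : IsCompact K := (isCompact_sphere 0 1).inter_left hDclosed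
  -- K is nonempty
  have hKne : K.Nonempty := by
    refine ⟨fun i => if i = Fin.last m then 0 else 1, ⟨?_, ?_⟩, ?_⟩
    · intro j
      dsimp only
      split_ifs <;> norm_num
    · have hy : (fun j : Fin m =>
          (fun i : Fin (m + 1) => if i = Fin.last m then (0:ℝ) else 1) j.castSucc) =
          fun _ : Fin m => (1 : ℝ) := by
        funext j
        exact if_neg (Fin.castSucc_lt_last j).ne
      show (if Fin.last m = Fin.last m then (0:ℝ) else 1) ≤ ρ * sortedVal m _ kk
      rw [if_pos rfl, hy]
      have : sortedVal m (fun _ : Fin m => (1 : ℝ)) kk = 1 := rfl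
      rw [this]
      linarith
    · rw [Metric.mem_sphere, dist_zero_right]
      refine le_antisymm ?_ ?_
      · rw [pi_norm_le_iff_of_nonneg (by norm_num)]
        intro i
        by_cases h : i = Fin.last m <;> simp [h]
      · have h0 : (0 : Fin (m + 1)) ≠ Fin.last m := by
          rw [Fin.ne_iff_vne]
          simp [Fin.last]
          omega
        have hle := norm_le_pi_norm
          (fun i : Fin (m + 1) => if i = Fin.last m then (0:ℝ) else 1) 0
        rw [if_neg h0] at hle
        simpa using hle
  -- boundary sets are null on K
  have hnull : ∀ σ ∈ K, Measure.pi (fun _ : Fin (m + 1) => gaussianReal 0 1)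
      {ξ | Qf m c σ ξ = 0} = 0 := by
    intro σ hσK
    have hσnorm : ‖σ‖ = 1 := by
      have := hσK.2
      rwa [Metric.mem_sphere, dist_zero_right] at this
    have hσne : σ ≠ 0 := by
      intro h
      rw [h] at hσnorm
      simp at hσnorm
    obtain ⟨i, hi⟩ := Function.ne_iff.mp hσne
    by_cases hlast : σ (Fin.last m) ≠ 0
    · refine null_zero_set m c σ (Fin.last m) (slice_finite ?_)
      rw [Qf_dir_last]
      exact pow_ne_zero _ hlast
    · push_neg at hlast
      have hine : i ≠ Fin.last m := by
        intro h
        rw [h] at hi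
        exact hi hlast
      obtain ⟨j, rfl⟩ := Fin.exists_castSucc_eq.mpr hine
      exact null_zero_set m c σ j.castSucc
        (slice_finite (Qf_dir_castSucc hm hc hc' σ j hi))
  have hcont : ContinuousOn (rejProb m c) K := rejProb_continuousOn m c K hnull
  obtain ⟨σs, hσsK, hmax⟩ := hKcomp.exists_isMaxOn hKne hcont
  refine ⟨σs, hσsK.1, Set.mem_image_of_mem _ hσsK.1, ?_⟩
  rintro x ⟨σ, hσD, rfl⟩
  by_cases h0 : σ = 0
  · have : rejProb m c σ = 0 := by
      rw [h0]
      have : (0 : Fin (m + 1) → ℝ) = fun _ => (0:ℝ) := rfl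
      rw [this, rejProb_zero]
    rw [this]
    exact rejProb_nonneg m c σs
  · have hσnorm : 0 < ‖σ‖ := norm_pos_iff.mpr h0
    set r := ‖σ‖⁻¹ with hr
    have hrpos : 0 < r := inv_pos.mpr hσnorm
    have hτD : (fun i => r * σ i) ∈ D := hetSet_smul m kk ρ hrpos.le hσD
    have hτsphere : (fun i => r * σ i) ∈ Metric.sphere (0 : Fin (m + 1) → ℝ) 1 := by
      rw [Metric.mem_sphere, dist_zero_right]
      have : (fun i => r * σ i) = r • σ := rfl
      rw [this, norm_smul, Real.norm_eq_abs, abs_of_pos hrpos, hr,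
        inv_mul_cancel₀ hσnorm.ne']
    have : rejProb m c σ = rejProb m c (fun i => r * σ i) :=
      (rejProb_smul m c σ hrpos).symm
    rw [this]
    exact hmax ⟨hτD, hτsphere⟩
end

section
/- Let m ≥ 4 be an integer and ρ > 0 a real. Then the function c ↦ H̄_m(c, ρ) is strictly decreasing on the interval (√(3(m−1)/(m(m−3))), ∞), and lim_{c→∞} H̄_m(c, ρ) < 0. -/
open Filter

/-- The function `H̄_m(c, ρ)` from Theorem 4 of the paper (here written as `Hbar m ρ c`). -/
noncomputable def Hbar (m : ℕ) (ρ c : ℝ) : ℝ :=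
  let κ : ℝ := (m : ℝ) * c ^ 2 / ((m : ℝ) - 1)
  let τ : ℝ := (κ + 1) / ((m : ℝ) * κ)
  let Z : ℝ := 1 / (2 * max ((m : ℝ) * ρ ^ 2 + 1) (κ + 2))
  max (3 * ((m : ℝ) * ρ ^ 2 + 1) / ((m : ℝ) * ρ ^ 2 + κ + 1)) ((2 * κ + 3) / (κ + 1)) +
    (1 - τ) / (1 - τ + min ((1 - 2 * τ) * κ * Z - 1 / 2) 0) -
    (m : ℝ) * κ / ((m : ℝ) * ρ ^ 2 + κ + 1) - 1

/-- `Hbar` as a function of `κ` (denoted `k`), with `q = m ρ²` and `n = m`. -/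
noncomputable def Faux (n q k : ℝ) : ℝ :=
  max (3 * (q + 1) / (q + k + 1)) ((2 * k + 3) / (k + 1)) +
    (1 - (k + 1) / (n * k)) /
      (1 - (k + 1) / (n * k) +
        min ((1 - 2 * ((k + 1) / (n * k))) * k * (1 / (2 * max (q + 1) (k + 2))) - 1 / 2) 0) -
    n * k / (q + k + 1) - 1

lemma Hbar_eq (m : ℕ) (ρ c : ℝ) :
    Hbar m ρ c = Faux (m : ℝ) ((m : ℝ) * ρ ^ 2) ((m : ℝ) * c ^ 2 / ((m : ℝ) - 1)) := rfl

lemma ratio_lt {N1 N2 q1 q2 : ℝ} (hq2 : 0 < q2) (hq : q2 < q1) (h1 : q1 < N1) (hN : N1 < N2) :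
    N2/(N2-q2) < N1/(N1-q1) := by
  have h2 : 0 < N1 - q1 := by linarith
  have h3 : 0 < N2 - q2 := by linarith
  rw [div_lt_div_iff₀ h3 h2]
  nlinarith [mul_lt_mul_of_pos_right hN hq2, mul_lt_mul_of_pos_left hq (show (0:ℝ) < N2 by linarith)]

lemma kfacts (n q k : ℝ) (hn : 4 ≤ n) (h : 3 < (n-3)*k) :
    0 < k ∧ 1/2 < 1 - (k+1)/(n*k) ∧
    0 < ((n-2)*k-2)/(2*n*max (q+1) (k+2)) ∧
    ((n-2)*k-2)/(2*n*max (q+1) (k+2)) < 1/2 ∧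
    min ((1 - 2*((k+1)/(n*k)))*k*(1/(2*max (q+1) (k+2))) - 1/2) 0
      = ((n-2)*k-2)/(2*n*max (q+1) (k+2)) - 1/2 := by
  have hn3 : (0:ℝ) < n - 3 := by linarith
  have hk : 0 < k := by nlinarith
  have hA : 0 < (n-2)*k - 2 := by nlinarith
  have hM : k + 2 ≤ max (q+1) (k+2) := le_max_right _ _
  have hMpos : 0 < max (q+1) (k+2) := lt_of_lt_of_le (by linarith) hM
  have hnpos : (0:ℝ) < n := by linarith
  have hnk : 0 < n * k := mul_pos hnpos hk
  have hden : 0 < 2*n*max (q+1) (k+2) := mul_pos (by linarith) hMpos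
  have ht : (k+1)/(n*k) < 1/2 := by rw [div_lt_iff₀ hnk]; nlinarith
  have hN : 1/2 < 1 - (k+1)/(n*k) := by linarith
  have hp : 0 < ((n-2)*k-2)/(2*n*max (q+1) (k+2)) := div_pos hA hden
  have hh : ((n-2)*k-2)/(2*n*max (q+1) (k+2)) < 1/2 := by
    rw [div_lt_iff₀ hden]
    nlinarith [mul_le_mul_of_nonneg_left hM (le_of_lt hnpos)]
  have heq : (1 - 2*((k+1)/(n*k)))*k*(1/(2*max (q+1) (k+2)))
      = ((n-2)*k-2)/(2*n*max (q+1) (k+2)) := by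
    field_simp
    ring
  refine ⟨hk, hN, hp, hh, ?_⟩
  rw [min_eq_left (by rw [heq]; linarith), heq]

set_option maxHeartbeats 2000000 in
lemma Faux_strictAnti (n q : ℝ) (hn : 4 ≤ n) (hq : 0 < q) {k1 k2 : ℝ}
    (h1 : 3 < (n-3)*k1) (h12 : k1 < k2) : Faux n q k2 < Faux n q k1 := by
  have hn3 : (0:ℝ) < n - 3 := by linarith
  have hnpos : (0:ℝ) < n := by linarith
  obtain ⟨hk1, hN1, hp1, hh1, hm1⟩ := kfacts n q k1 hn h1
  have h2 : 3 < (n-3)*k2 := by nlinarith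
  obtain ⟨hk2, hN2, hp2, hh2, hm2⟩ := kfacts n q k2 hn h2
  have hA1 : 0 < (n-2)*k1 - 2 := by nlinarith
  have hA2 : 0 < (n-2)*k2 - 2 := by nlinarith
  unfold Faux
  rw [hm1, hm2]
  have T1 : max (3*(q+1)/(q+k2+1)) ((2*k2+3)/(k2+1))
      < max (3*(q+1)/(q+k1+1)) ((2*k1+3)/(k1+1)) := by
    apply max_lt_max
    · exact div_lt_div_of_pos_left (by linarith) (by linarith) (by linarith)
    · rw [div_lt_div_iff₀ (by linarith) (by linarith)]; nlinarith
  have T3 : n*k1/(q+k1+1) < n*k2/(q+k2+1) := by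
    rw [div_lt_div_iff₀ (by linarith) (by linarith)]
    nlinarith [mul_pos (mul_pos hnpos (sub_pos.mpr h12)) (show (0:ℝ) < q+1 by linarith)]
  have hcomp : ((n-2)*k1-2)/(2*n*max (q+1) (k1+2)) < ((n-2)*k2-2)/(2*n*max (q+1) (k2+2)) := by
    rcases le_total (k2+2) (q+1) with hc | hc
    · rw [max_eq_left hc, max_eq_left (by linarith : k1+2 ≤ q+1)]
      have hA12 : (n-2)*k1-2 < (n-2)*k2-2 := by
        nlinarith [mul_pos (show (0:ℝ) < n-2 by linarith) (sub_pos.mpr h12)]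
      rw [div_lt_div_iff₀ (by positivity) (by positivity)]
      nlinarith [mul_lt_mul_of_pos_right hA12 (show (0:ℝ) < 2*n*(q+1) by positivity)]
    · rw [max_eq_right hc]
      have hM1 : max (q+1) (k1+2) ≤ k2 + 2 := max_le (by linarith) (by linarith)
      have hM1pos : 0 < max (q+1) (k1+2) := lt_of_lt_of_le (by linarith) (le_max_right _ _)
      have key : ((n-2)*k1-2)*(k2+2) < ((n-2)*k2-2)*(k1+2) := by
        nlinarith [mul_pos hnpos (sub_pos.mpr h12)]
      have hmm : 2*n*(k1+2) ≤ 2*n*(max (q+1) (k1+2)) :=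
        mul_le_mul_of_nonneg_left (le_max_right (q+1) (k1+2)) (show (0:ℝ) ≤ 2*n by linarith)
      have step1 : ((n-2)*k1-2)/(2*n*max (q+1) (k1+2)) ≤ ((n-2)*k1-2)/(2*n*(k1+2)) := by
        rw [div_le_div_iff₀ (by positivity) (by positivity)]
        nlinarith [mul_le_mul_of_nonneg_left hmm (le_of_lt hA1)]
      have step2 : ((n-2)*k1-2)/(2*n*(k1+2)) < ((n-2)*k2-2)/(2*n*(k2+2)) := by
        rw [div_lt_div_iff₀ (by positivity) (by positivity)]
        nlinarith [mul_lt_mul_of_pos_left key (show (0:ℝ) < 2*n by linarith)]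
      linarith
  have hNlt : 1 - (k1+1)/(n*k1) < 1 - (k2+1)/(n*k2) := by
    have : (k2+1)/(n*k2) < (k1+1)/(n*k1) := by
      rw [div_lt_div_iff₀ (by positivity) (by positivity)]
      nlinarith [mul_lt_mul_of_pos_left h12 hnpos]
    linarith
  have T2 : (1 - (k2+1)/(n*k2)) /
        (1 - (k2+1)/(n*k2) + (((n-2)*k2-2)/(2*n*max (q+1) (k2+2)) - 1/2))
      < (1 - (k1+1)/(n*k1)) /
        (1 - (k1+1)/(n*k1) + (((n-2)*k1-2)/(2*n*max (q+1) (k1+2)) - 1/2)) := by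
    have e1 : 1 - (k1+1)/(n*k1) + (((n-2)*k1-2)/(2*n*max (q+1) (k1+2)) - 1/2)
        = (1 - (k1+1)/(n*k1)) - (1/2 - ((n-2)*k1-2)/(2*n*max (q+1) (k1+2))) := by ring
    have e2 : 1 - (k2+1)/(n*k2) + (((n-2)*k2-2)/(2*n*max (q+1) (k2+2)) - 1/2)
        = (1 - (k2+1)/(n*k2)) - (1/2 - ((n-2)*k2-2)/(2*n*max (q+1) (k2+2))) := by ring
    rw [e1, e2]
    exact ratio_lt (by linarith) (by linarith) (by linarith) hNlt
  linarith

set_option maxHeartbeats 1000000 in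
lemma Faux_tendsto (n q : ℝ) (hn : 4 ≤ n) (hq : 0 < q) :
    Tendsto (Faux n q) atTop (nhds (1 + (n-1)/(n-2) - n)) := by
  have hnpos : (0:ℝ) < n := by linarith
  have h0 : Tendsto (fun k : ℝ => k⁻¹) atTop (nhds (0:ℝ)) := tendsto_inv_atTop_zero
  have hne : ((n-2) - 2*(0:ℝ))*(2+2*(0:ℝ)) ≠ 0 := by
    have : (0:ℝ) < ((n-2) - 2*(0:ℝ))*(2+2*(0:ℝ)) := by nlinarith
    exact this.ne'
  have H : Tendsto (fun k : ℝ =>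
      (2 + 3*k⁻¹)/(1 + k⁻¹)
      + (2 + 4*k⁻¹)*((n-1) - k⁻¹)/(((n-2) - 2*k⁻¹)*(2 + 2*k⁻¹))
      - n/(q*k⁻¹ + 1 + k⁻¹) - 1) atTop
      (nhds ((2 + 3*(0:ℝ))/(1 + 0)
      + (2 + 4*(0:ℝ))*((n-1) - 0)/(((n-2) - 2*(0:ℝ))*(2 + 2*(0:ℝ)))
      - n/(q*0 + 1 + 0) - 1)) := by
    apply Tendsto.sub _ tendsto_const_nhds
    apply Tendsto.sub
    apply Tendsto.add
    · exact Tendsto.div (tendsto_const_nhds.add (h0.const_mul 3))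
        (tendsto_const_nhds.add h0) (by norm_num)
    · exact Tendsto.div ((tendsto_const_nhds.add (h0.const_mul 4)).mul (tendsto_const_nhds.sub h0))
        ((tendsto_const_nhds.sub (h0.const_mul 2)).mul (tendsto_const_nhds.add (h0.const_mul 2)))
        hne
    · exact Tendsto.div tendsto_const_nhds
        (((h0.const_mul q).add tendsto_const_nhds).add h0) (by norm_num)
  have hval : (2 + 3*(0:ℝ))/(1 + 0)
      + (2 + 4*(0:ℝ))*((n-1) - 0)/(((n-2) - 2*(0:ℝ))*(2 + 2*(0:ℝ)))
      - n/(q*0 + 1 + 0) - 1 = 1 + (n-1)/(n-2) - n := by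
    have h2 : (n:ℝ) - 2 ≠ 0 := by intro hc; rw [sub_eq_zero] at hc; linarith [hc]
    simp only [mul_zero, sub_zero, add_zero, zero_add]
    field_simp
    ring
  rw [hval] at H
  refine Tendsto.congr' ?_ H
  filter_upwards [eventually_ge_atTop (max 4 (q+1))] with k hk
  have hk4 : (4:ℝ) ≤ k := le_trans (le_max_left _ _) hk
  have hkq : q + 1 ≤ k := le_trans (le_max_right _ _) hk
  have hk0 : (0:ℝ) < k := by linarith
  have h3 : 3 < (n-3)*k := by nlinarith
  obtain ⟨-, hN, hp, hh, hm⟩ := kfacts n q k hn h3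
  have hMax : max (q+1) (k+2) = k + 2 := max_eq_right (by linarith)
  rw [hMax] at hp hh hm
  have hmax1 : 3*(q+1)/(q+k+1) ≤ (2*k+3)/(k+1) := by
    rw [div_le_div_iff₀ (by linarith) (by linarith)]
    nlinarith [mul_pos hk0 (show (0:ℝ) < 2*k+2-q by linarith)]
  unfold Faux
  rw [hMax, hm, max_eq_right hmax1]
  have hD : 0 < 1 - (k+1)/(n*k) + (((n-2)*k-2)/(2*n*(k+2)) - 1/2) := by linarith
  have hki : k⁻¹ ≤ 1/4 := by
    rw [show (1:ℝ)/4 = (4:ℝ)⁻¹ by norm_num]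
    exact inv_anti₀ (by norm_num) hk4
  have hkipos : 0 < k⁻¹ := inv_pos.mpr hk0
  have hden1 : ((n-2) - 2*k⁻¹)*(2 + 2*k⁻¹) ≠ 0 := by
    have : (0:ℝ) < ((n-2) - 2*k⁻¹)*(2 + 2*k⁻¹) := by nlinarith
    exact this.ne'
  have hnk : (n:ℝ)*k ≠ 0 := by positivity
  have hk2 : (k:ℝ)+2 ≠ 0 := by linarith
  have hn0 : (n:ℝ) ≠ 0 := hnpos.ne'
  have ea : (2 + 3*k⁻¹)/(1 + k⁻¹) = (2*k+3)/(k+1) := by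
    rw [div_eq_div_iff (by positivity) (by positivity)]
    field_simp
  have eb : (2 + 4*k⁻¹)*((n-1) - k⁻¹)/(((n-2) - 2*k⁻¹)*(2 + 2*k⁻¹))
      = (1 - (k+1)/(n*k)) / (1 - (k+1)/(n*k) + (((n-2)*k-2)/(2*n*(k+2)) - 1/2)) := by
    rw [div_eq_div_iff hden1 hD.ne']
    field_simp
    ring
  have ec : n/(q*k⁻¹ + 1 + k⁻¹) = n*k/(q+k+1) := by
    rw [div_eq_div_iff (by positivity) (by positivity)]
    field_simp
  rw [ea, eb, ec]

/-- Theorem 4(i) of the paper: `c ↦ H̄_m(c, ρ)` is strictly decreasing on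
`(√(3(m−1)/(m(m−3))), ∞)` and its limit as `c → ∞` is negative. -/
theorem stmt5 (m : ℕ) (hm : 4 ≤ m) (ρ : ℝ) (hρ : 0 < ρ) :
    StrictAntiOn (Hbar m ρ)
      (Set.Ioi (Real.sqrt (3 * ((m : ℝ) - 1) / ((m : ℝ) * ((m : ℝ) - 3))))) ∧
    ∃ l : ℝ, l < 0 ∧ Tendsto (Hbar m ρ) atTop (nhds l) := by
  have hn : (4:ℝ) ≤ (m:ℝ) := by exact_mod_cast hm
  set n : ℝ := (m:ℝ) with hn_def
  have hnpos : (0:ℝ) < n := by linarith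
  have hn3 : (0:ℝ) < n - 3 := by linarith
  have hq : 0 < n * ρ ^ 2 := by positivity
  have harg : (0:ℝ) ≤ 3 * (n - 1) / (n * (n - 3)) :=
    div_nonneg (by linarith) (by nlinarith)
  have hkc : ∀ c : ℝ, c ∈ Set.Ioi (Real.sqrt (3 * (n - 1) / (n * (n - 3)))) →
      3 < (n - 3) * (n * c ^ 2 / (n - 1)) := by
    intro c hc
    have hc' : Real.sqrt (3 * (n - 1) / (n * (n - 3))) < c := hc
    have hcsq : 3 * (n - 1) / (n * (n - 3)) < c ^ 2 := by
      rw [← Real.sq_sqrt harg]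
      exact pow_lt_pow_left₀ hc' (Real.sqrt_nonneg _) two_ne_zero
    rw [div_lt_iff₀ (by nlinarith)] at hcsq
    rw [show (n - 3) * (n * c ^ 2 / (n - 1)) = c ^ 2 * (n * (n - 3)) / (n - 1) by ring,
      lt_div_iff₀ (by linarith : (0:ℝ) < n - 1)]
    linarith
  constructor
  · intro c1 hc1 c2 hc2 h12
    have hc1pos : 0 < c1 :=
      lt_of_le_of_lt (Real.sqrt_nonneg _) hc1
    rw [Hbar_eq, Hbar_eq]
    apply Faux_strictAnti n (n * ρ ^ 2) hn hq (hkc c1 hc1)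
    have : c1 ^ 2 < c2 ^ 2 := pow_lt_pow_left₀ h12 (le_of_lt hc1pos) two_ne_zero
    rw [div_lt_div_iff₀ (by linarith) (by linarith)]
    exact mul_lt_mul_of_pos_right (mul_lt_mul_of_pos_left this hnpos) (by linarith)
  · refine ⟨1 + (n - 1)/(n - 2) - n, ?_, ?_⟩
    · have : (n - 1)/(n - 2) < 3 := by
        rw [div_lt_iff₀ (by linarith)]; linarith
      linarith
    · have hκ : Tendsto (fun c : ℝ => n * c ^ 2 / (n - 1)) atTop atTop := by
        have h1 : Tendsto (fun c : ℝ => c ^ 2) atTop atTop := tendsto_pow_atTop two_ne_zero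
        have h2 := h1.const_mul_atTop (div_pos hnpos (by linarith : (0:ℝ) < n - 1))
        exact h2.congr (fun c => by ring)
      have := (Faux_tendsto n (n * ρ ^ 2) hn hq).comp hκ
      exact this.congr (fun c => (Hbar_eq m ρ c).symm)
end

section
/- Let m ≥ 2 be an integer, c > 0 a real, and ψ_1, …, ψ_{m+1} arbitrary real numbers. Set κ = m c²/(m−1), let ψ̃ = (ψ_{m+1}, ψ_1, …, ψ_m)ᵀ ∈ ℝ^{m+1}, and let V be the (m+1)×(m+1) symmetric matrix given in block form by V = [ [−m, 1_mᵀ], [1_m, κ I_m − ((κ+1)/m) 1_m 1_mᵀ] ], where 1_m ∈ ℝ^m is the all-ones vector and I_m the m×m identity matrix. Then |ψ_{m+1} − ψ̄_m| > c S_m if and only if ψ̃ᵀ V ψ̃ < 0. -/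
open MeasureTheory

/-- The matrix `V = [[−m, 1ᵀ], [1, κ I − ((κ+1)/m) 1 1ᵀ]]` with `κ = m c²/(m−1)`,
where index `0` corresponds to the treated cluster. -/
noncomputable def Vmat (m : ℕ) (c : ℝ) : Matrix (Fin (m + 1)) (Fin (m + 1)) ℝ :=
  fun i j =>
    if i = 0 then (if j = 0 then -(m : ℝ) else 1)
    else if j = 0 then 1
    else (if i = j then (m : ℝ) * c ^ 2 / ((m : ℝ) - 1) else 0) -
      ((m : ℝ) * c ^ 2 / ((m : ℝ) - 1) + 1) / (m : ℝ)

/-- Lemma S1 of the paper: `|ψ_{m+1} − ψ̄_m| > c S_m ↔ ψ̃ᵀ V ψ̃ < 0`,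
where `ψ̃ = (ψ_{m+1}, ψ_1, …, ψ_m)ᵀ`. -/
theorem stmt9 (m : ℕ) (hm : 2 ≤ m) (c : ℝ) (hc : 0 < c) (ψ : Fin (m + 1) → ℝ) :
    |ψ (Fin.last m) - sMean (fun j : Fin m => ψ j.castSucc)| >
        c * Real.sqrt (sVar (fun j : Fin m => ψ j.castSucc)) ↔
      dotProduct (Fin.cons (ψ (Fin.last m)) (fun j : Fin m => ψ j.castSucc))
        ((Vmat m c).mulVec (Fin.cons (ψ (Fin.last m)) (fun j : Fin m => ψ j.castSucc))) < 0 := by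
  set y : Fin m → ℝ := fun j => ψ j.castSucc with hy
  set a : ℝ := ψ (Fin.last m) with ha
  have hm2 : (2:ℝ) ≤ (m:ℝ) := by exact_mod_cast hm
  have hmpos : (0:ℝ) < (m:ℝ) := by linarith
  have hm0 : (m:ℝ) ≠ 0 := ne_of_gt hmpos
  have hm1pos : (0:ℝ) < (m:ℝ) - 1 := by linarith
  have hm1 : (m:ℝ) - 1 ≠ 0 := ne_of_gt hm1pos
  set S : ℝ := ∑ j, y j with hS
  set T : ℝ := ∑ j, (y j)^2 with hT
  set κ : ℝ := (m:ℝ) * c ^ 2 / ((m:ℝ) - 1) with hκ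
  have hmean : sMean y = S / m := rfl
  have hvar : sVar y = (T - S^2/m) / ((m:ℝ)-1) := by
    unfold sVar
    congr 1
    have : ∑ j, (y j - sMean y)^2
        = ∑ j, ((y j)^2 - 2*(S/m)*(y j) + (S/m)^2) := by
      refine Finset.sum_congr rfl fun j _ => ?_
      rw [hmean]; ring
    rw [this, Finset.sum_add_distrib, Finset.sum_sub_distrib, ← hT,
      ← Finset.mul_sum, ← hS, Finset.sum_const, Finset.card_univ, Fintype.card_fin,
      nsmul_eq_mul]
    field_simp
    ring
  have hvarnn : 0 ≤ sVar y := by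
    unfold sVar
    apply div_nonneg _ (le_of_lt hm1pos)
    exact Finset.sum_nonneg fun j _ => sq_nonneg _
  -- compute the quadratic form
  have hQ : dotProduct (Fin.cons a y) ((Vmat m c).mulVec (Fin.cons a y))
      = (m:ℝ) * (c^2 * sVar y - (a - sMean y)^2) := by
    have hrow : ∀ i : Fin m,
        (∑ j, Vmat m c i.succ j * (Fin.cons a y : Fin (m+1) → ℝ) j)
          = a + κ * y i - (κ + 1)/m * S := by
      intro i
      rw [Fin.sum_univ_succ]
      have h0 : Vmat m c i.succ 0 * (Fin.cons a y : Fin (m+1) → ℝ) 0 = a := by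
        simp [Vmat, Fin.succ_ne_zero]
      rw [h0]
      have hrest : ∑ j : Fin m, Vmat m c i.succ j.succ *
          (Fin.cons a y : Fin (m+1) → ℝ) j.succ
          = ∑ j : Fin m, ((if i = j then κ else 0) - (κ+1)/m) * y j := by
        refine Finset.sum_congr rfl fun j _ => ?_
        simp [Vmat, Fin.succ_ne_zero, Fin.succ_inj, hκ]
      rw [hrest]
      have : ∑ j : Fin m, ((if i = j then κ else 0) - (κ+1)/m) * y j
          = (∑ j : Fin m, (if i = j then κ else 0) * y j) - ∑ j : Fin m, (κ+1)/m * y j := by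
        rw [← Finset.sum_sub_distrib]
        refine Finset.sum_congr rfl fun j _ => ?_
        ring
      rw [this]
      have h1 : ∑ j : Fin m, (if i = j then κ else 0) * y j = κ * y i := by
        rw [Finset.sum_eq_single i]
        · simp
        · intro b _ hb; simp [Ne.symm hb]
        · intro h; exact absurd (Finset.mem_univ i) h
      rw [h1, ← Finset.mul_sum, ← hS]
      ring
    rw [dotProduct, Fin.sum_univ_succ]
    have hmv0 : (Fin.cons a y : Fin (m+1) → ℝ) 0 * ((Vmat m c).mulVec (Fin.cons a y)) 0
        = a * (-(m:ℝ) * a + S) := by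
      rw [Fin.cons_zero, Matrix.mulVec, dotProduct, Fin.sum_univ_succ]
      have : ∑ j : Fin m, Vmat m c 0 j.succ * (Fin.cons a y : Fin (m+1) → ℝ) j.succ
          = ∑ j : Fin m, y j := by
        refine Finset.sum_congr rfl fun j _ => ?_
        simp [Vmat, Fin.succ_ne_zero]
      rw [this]
      simp [Vmat, ← hS]
    rw [hmv0]
    have hrests : ∑ i : Fin m, (Fin.cons a y : Fin (m+1) → ℝ) i.succ *
        ((Vmat m c).mulVec (Fin.cons a y)) i.succ
        = ∑ i : Fin m, y i * (a + κ * y i - (κ + 1)/m * S) := by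
      refine Finset.sum_congr rfl fun i _ => ?_
      rw [Fin.cons_succ, Matrix.mulVec, dotProduct, hrow i]
    rw [hrests]
    have hsum : ∑ i : Fin m, y i * (a + κ * y i - (κ + 1)/m * S)
        = a * S + κ * T - (κ+1)/m * S^2 := by
      have : ∀ i : Fin m, y i * (a + κ * y i - (κ + 1)/m * S)
          = a * y i + κ * (y i)^2 - (κ+1)/m * S * y i := by intro i; ring
      rw [Finset.sum_congr rfl fun i _ => this i, Finset.sum_sub_distrib,
        Finset.sum_add_distrib, ← Finset.mul_sum, ← Finset.mul_sum, ← Finset.mul_sum,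
        ← hS, ← hT]
      ring
    rw [hsum, hvar, hmean, hκ]
    field_simp
    ring
  rw [hQ, hmean]
  have hd2 : (m:ℝ) * (c^2 * sVar y - (a - S/m)^2) < 0 ↔ c^2 * sVar y < (a - S/m)^2 := by
    constructor
    · intro h; nlinarith
    · intro h; nlinarith
  rw [hd2]
  have hsq : (Real.sqrt (sVar y))^2 = sVar y := Real.sq_sqrt hvarnn
  constructor
  · intro h
    have hnn : 0 ≤ c * Real.sqrt (sVar y) := by positivity
    nlinarith [abs_nonneg (a - S/m), sq_abs (a - S/m)]
  · intro h
    have habs : c * Real.sqrt (sVar y) < |a - S/m| := by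
      have h1 : (c * Real.sqrt (sVar y))^2 < |a - S/m|^2 := by
        rw [sq_abs]; nlinarith
      have hnn : 0 ≤ c * Real.sqrt (sVar y) := by positivity
      exact lt_of_pow_lt_pow_left₀ 2 (abs_nonneg _) h1
    exact habs
end

section
/- Let m ≥ 2 be an integer, c > 0 a real, κ = m c²/(m−1), and σ_1, …, σ_{m+1} ≥ 0. Let D = diag(σ_{m+1}, σ_1, …, σ_m) be the (m+1)×(m+1) diagonal matrix and let V be the block matrix V = [ [−m, 1_mᵀ], [1_m, κ I_m − ((κ+1)/m) 1_m 1_mᵀ] ], where 1_m ∈ ℝ^m is the all-ones vector and I_m the m×m identity. Then for every λ ∈ ℝ, det( D V D − λ I_{m+1} ) = f(λ), where f(λ) = −(m σ_{m+1}² + λ) ∏_{i=1}^m (κ σ_i² − λ) + ( κ σ_{m+1}² + ((κ+1)/m) λ ) · Σ_{i=1}^m [ σ_i² ∏_{j≠i, 1≤j≤m} (κ σ_j² − λ) ]. -/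
open MeasureTheory

/-- `κ = m c² / (m − 1)`. -/
noncomputable def kappa (m : ℕ) (c : ℝ) : ℝ := (m : ℝ) * c ^ 2 / ((m : ℝ) - 1)

/-- The characteristic polynomial
`f(λ) = −(m σ_{m+1}² + λ) ∏ᵢ (κ σᵢ² − λ) + (κ σ_{m+1}² + ((κ+1)/m) λ) Σᵢ σᵢ² ∏_{j≠i} (κ σⱼ² − λ)`. -/
noncomputable def ffun (m : ℕ) (c : ℝ) (σ : Fin (m + 1) → ℝ) (lam : ℝ) : ℝ :=
  -((m : ℝ) * σ (Fin.last m) ^ 2 + lam) *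
      ∏ i : Fin m, (kappa m c * σ i.castSucc ^ 2 - lam) +
    (kappa m c * σ (Fin.last m) ^ 2 + (kappa m c + 1) / (m : ℝ) * lam) *
      ∑ i : Fin m, σ i.castSucc ^ 2 *
        ∏ j ∈ Finset.univ.erase i, (kappa m c * σ j.castSucc ^ 2 - lam)

namespace AuxS2

noncomputable def tvec (m : ℕ) (σ : Fin (m + 1) → ℝ) : Fin (m + 1) → ℝ :=
  Fin.cons 0 (fun k => σ k.castSucc)

noncomputable def dvec (m : ℕ) (c : ℝ) (σ : Fin (m + 1) → ℝ) (lam : ℝ) : Fin (m + 1) → ℝ :=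
  Fin.cons (-((m : ℝ) * σ (Fin.last m) ^ 2 + lam))
    (fun k => kappa m c * σ k.castSucc ^ 2 - lam)

noncomputable def Umat (m : ℕ) (σ : Fin (m + 1) → ℝ) : Matrix (Fin (m + 1)) (Fin 2) ℝ :=
  fun i k => if k = 0 then (if i = 0 then σ (Fin.last m) else 0) else tvec m σ i

noncomputable def Wmat (m : ℕ) (c : ℝ) (σ : Fin (m + 1) → ℝ) : Matrix (Fin (m + 1)) (Fin 2) ℝ :=
  fun i k => if k = 0 then tvec m σ i
    else (if i = 0 then σ (Fin.last m) else 0) - (kappa m c + 1) / (m : ℝ) * tvec m σ i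

lemma decomp (m : ℕ) (hm : (m:ℝ) ≠ 0) (c : ℝ) (σ : Fin (m + 1) → ℝ) (lam : ℝ) :
    Matrix.diagonal (Fin.cons (σ (Fin.last m)) (fun j : Fin m => σ j.castSucc)) *
        Vmat m c *
        Matrix.diagonal (Fin.cons (σ (Fin.last m)) (fun j : Fin m => σ j.castSucc)) -
        lam • (1 : Matrix (Fin (m + 1)) (Fin (m + 1)) ℝ) =
      Matrix.diagonal (dvec m c σ lam) + Umat m σ * (Wmat m c σ).transpose := by
  ext i j
  simp only [Matrix.sub_apply, Matrix.smul_apply, Matrix.one_apply, Matrix.add_apply,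
    Matrix.diagonal_apply, Matrix.diagonal_mul, Matrix.mul_diagonal, smul_eq_mul]
  simp only [Matrix.mul_apply, Matrix.transpose_apply, Fin.sum_univ_two]
  refine Fin.cases ?_ (fun a => ?_) i <;> refine Fin.cases ?_ (fun b => ?_) j <;>
    simp [Vmat, Umat, Wmat, tvec, dvec, Fin.succ_ne_zero, Fin.succ_inj, kappa]
  all_goals (try split_ifs with h)
  any_goals (subst h; ring)
  all_goals try (exact absurd h.symm (Fin.succ_ne_zero _))
  all_goals ring

lemma key (m : ℕ) (hm : 2 ≤ m) (c : ℝ) (σ : Fin (m + 1) → ℝ) (lam : ℝ)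
    (h0 : (m : ℝ) * σ (Fin.last m) ^ 2 + lam ≠ 0)
    (h1 : ∀ k : Fin m, kappa m c * σ k.castSucc ^ 2 - lam ≠ 0) :
    (Matrix.diagonal (Fin.cons (σ (Fin.last m)) (fun j : Fin m => σ j.castSucc)) *
        Vmat m c *
        Matrix.diagonal (Fin.cons (σ (Fin.last m)) (fun j : Fin m => σ j.castSucc)) -
        lam • (1 : Matrix (Fin (m + 1)) (Fin (m + 1)) ℝ)).det = ffun m c σ lam := by
  have hm0 : (m : ℝ) ≠ 0 := Nat.cast_ne_zero.mpr (by omega)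
  rw [decomp m hm0 c σ lam]
  set κ := kappa m c with hκ
  set s0 := σ (Fin.last m) with hs0
  set δ := dvec m c σ lam with hδdef
  have hδ : ∀ i, δ i ≠ 0 := by
    intro i
    refine Fin.cases ?_ (fun k => ?_) i
    · simpa [hδdef, dvec] using neg_ne_zero.mpr h0
    · simpa [hδdef, dvec] using h1 k
  set δ' : Fin (m + 1) → ℝ := fun i => (δ i)⁻¹ with hδ'
  have hid : Matrix.diagonal δ * Matrix.diagonal δ' = 1 := by
    rw [Matrix.diagonal_mul_diagonal]
    have : (fun i => δ i * δ' i) = fun _ => (1 : ℝ) :=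
      funext fun i => mul_inv_cancel₀ (hδ i)
    rw [this, Matrix.diagonal_one]
  have step : Matrix.diagonal δ + Umat m σ * (Wmat m c σ).transpose
      = Matrix.diagonal δ *
        (1 + Matrix.diagonal δ' * Umat m σ * (Wmat m c σ).transpose) := by
    rw [Matrix.mul_add, Matrix.mul_one, ← Matrix.mul_assoc, ← Matrix.mul_assoc, hid,
      Matrix.one_mul]
  rw [step, Matrix.det_mul, Matrix.det_one_add_mul_comm]
  set X := (Wmat m c σ).transpose * (Matrix.diagonal δ' * Umat m σ) with hX
  set q : ℝ := ∑ i : Fin m, σ i.castSucc ^ 2 * (κ * σ i.castSucc ^ 2 - lam)⁻¹ with hq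
  have hXe : ∀ k l, X k l = ∑ i : Fin (m + 1), Wmat m c σ i k * (δ' i * Umat m σ i l) := by
    intro k l
    rw [hX, ← Matrix.mul_assoc, Matrix.mul_apply]
    simp only [Matrix.mul_diagonal, Matrix.transpose_apply]
    exact Finset.sum_congr rfl fun i _ => by ring
  have hδ0 : δ 0 = -((m : ℝ) * s0 ^ 2 + lam) := by simp [hδdef, dvec, hs0]
  have hδs : ∀ j : Fin m, δ j.succ = κ * σ j.castSucc ^ 2 - lam := by
    intro j; simp [hδdef, dvec, hκ]
  have e00 : X 0 0 = 0 := by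
    rw [hXe, Fin.sum_univ_succ]
    simp [Umat, Wmat, tvec, Fin.succ_ne_zero]
  have e01 : X 0 1 = q := by
    rw [hXe, Fin.sum_univ_succ, hq]
    simp only [Umat, Wmat, tvec, Fin.cons_zero, Fin.cons_succ, hδ', hδs]
    simp [mul_comm, mul_assoc, pow_two]
  have e10 : X 1 0 = s0 ^ 2 * (δ 0)⁻¹ := by
    rw [hXe, Fin.sum_univ_succ]
    simp only [Umat, Wmat, tvec, Fin.cons_zero, Fin.cons_succ, hδ', Fin.succ_ne_zero]
    simp [pow_two]; ring
  have e11 : X 1 1 = -((κ + 1) / (m : ℝ) * q) := by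
    rw [hXe, Fin.sum_univ_succ, hq]
    simp only [Umat, Wmat, tvec, Fin.cons_zero, Fin.cons_succ, hδ', hδs, Fin.succ_ne_zero]
    simp [Finset.mul_sum, pow_two]
    ring_nf
    refine Finset.sum_congr rfl fun i _ => ?_
    ring
  rw [Matrix.det_fin_two]
  simp only [Matrix.add_apply, Matrix.one_apply_eq, Matrix.one_apply_ne (by decide : (0 : Fin 2) ≠ 1),
    Matrix.one_apply_ne (by decide : (1 : Fin 2) ≠ 0), e00, e01, e10, e11]
  rw [Matrix.det_diagonal, Fin.prod_univ_succ, hδ0]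
  have hProd : ∀ j : Fin m, δ j.succ = κ * σ j.castSucc ^ 2 - lam := hδs
  rw [Finset.prod_congr rfl fun j _ => hProd j]
  set P : ℝ := ∏ i : Fin m, (κ * σ i.castSucc ^ 2 - lam) with hP
  set S : ℝ := ∑ i : Fin m, σ i.castSucc ^ 2 *
      ∏ j ∈ Finset.univ.erase i, (κ * σ j.castSucc ^ 2 - lam) with hS
  have hqP : q * P = S := by
    rw [hq, hS, Finset.sum_mul]
    refine Finset.sum_congr rfl fun i _ => ?_
    rw [hP, ← Finset.mul_prod_erase _ _ (Finset.mem_univ i)]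
    have := h1 i
    field_simp
    have h' : σ i.castSucc ^ 2 * κ - lam ≠ 0 := by rwa [mul_comm]
    field_simp
  have hffun : ffun m c σ lam = -((m : ℝ) * s0 ^ 2 + lam) * P + (κ * s0 ^ 2 + (κ + 1) / (m : ℝ) * lam) * S := rfl
  rw [hffun, ← hqP]
  have hd0 : -((m : ℝ) * s0 ^ 2 + lam) ≠ 0 := neg_ne_zero.mpr h0
  have hd0' : (-lam - (m : ℝ) * s0 ^ 2) ≠ 0 := fun h => h0 (by linarith)
  have hinv : -((m : ℝ) * s0 ^ 2 + lam) * (-((m : ℝ) * s0 ^ 2 + lam))⁻¹ = 1 :=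
    mul_inv_cancel₀ hd0
  have hminv : (m : ℝ) * ((m : ℝ))⁻¹ = 1 := mul_inv_cancel₀ hm0
  linear_combination (q * P * s0 ^ 2 * (κ + 1)) * hminv - (q * P * s0 ^ 2) * hinv

end AuxS2

/-- Lemma S2 of the paper: `f` is the characteristic polynomial of `D V D`,
where `D = diag(σ_{m+1}, σ_1, …, σ_m)`. -/
theorem stmt10 (m : ℕ) (hm : 2 ≤ m) (c : ℝ) (hc : 0 < c)
    (σ : Fin (m + 1) → ℝ) (hσ : ∀ j, 0 ≤ σ j) (lam : ℝ) :
    (Matrix.diagonal (Fin.cons (σ (Fin.last m)) (fun j : Fin m => σ j.castSucc)) *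
        Vmat m c *
        Matrix.diagonal (Fin.cons (σ (Fin.last m)) (fun j : Fin m => σ j.castSucc)) -
        lam • (1 : Matrix (Fin (m + 1)) (Fin (m + 1)) ℝ)).det = ffun m c σ lam := by
  set F : ℝ → ℝ := fun l =>
    (Matrix.diagonal (Fin.cons (σ (Fin.last m)) (fun j : Fin m => σ j.castSucc)) *
        Vmat m c *
        Matrix.diagonal (Fin.cons (σ (Fin.last m)) (fun j : Fin m => σ j.castSucc)) -
        l • (1 : Matrix (Fin (m + 1)) (Fin (m + 1)) ℝ)).det with hF
  suffices h : F = ffun m c σ from congrFun h lam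
  have hFc : Continuous F := by
    apply Continuous.matrix_det
    exact continuous_const.sub (continuous_id.smul continuous_const)
  have hGc : Continuous (ffun m c σ) := by
    unfold ffun
    fun_prop
  have hcnt : Set.Countable ({-((m : ℝ) * σ (Fin.last m) ^ 2)} ∪
      Set.range (fun k : Fin m => kappa m c * σ k.castSucc ^ 2)) :=
    (Set.countable_singleton _).union (Set.countable_range _)
  have hdense := Set.Countable.dense_compl ℝ hcnt
  have hsub : ({-((m : ℝ) * σ (Fin.last m) ^ 2)} ∪
      Set.range (fun k : Fin m => kappa m c * σ k.castSucc ^ 2))ᶜ ⊆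
      {l : ℝ | (m : ℝ) * σ (Fin.last m) ^ 2 + l ≠ 0 ∧
        ∀ k : Fin m, kappa m c * σ k.castSucc ^ 2 - l ≠ 0} := by
    intro l hl
    simp only [Set.mem_compl_iff, Set.mem_union, Set.mem_singleton_iff, Set.mem_range,
      not_or, not_exists] at hl
    refine ⟨fun h => hl.1 (by linarith), fun k h => hl.2 k (by linarith)⟩
  have hdense' : Dense {l : ℝ | (m : ℝ) * σ (Fin.last m) ^ 2 + l ≠ 0 ∧
      ∀ k : Fin m, kappa m c * σ k.castSucc ^ 2 - l ≠ 0} := hdense.mono hsub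
  exact hFc.ext_on hdense' hGc fun l hl => AuxS2.key m hm c σ l hl.1 hl.2
end

section
/- Let m ≥ 2 be an integer, κ > 0 a real, and τ = (κ+1)/(m κ). For x ≥ 0 and k ∈ {1, …, m}, define the quadratic h(θ; x, k) = −(k−1)x − [ m − x + (m+1−k) τ x ] θ + θ². Then: (a) h(·; x, k) has exactly one positive root, denoted θ(x, k); (b) θ(x, k) ≥ m for all x ≥ 0 and all k ∈ {1, …, m}; (c) θ(0, k) = m for every k ∈ {1, …, m}, and θ(x, 1) = m + x/κ for every x ≥ 0. -/
/-- The quadratic `h(θ; x, k) = −(k−1)x − [m − x + (m+1−k) τ x] θ + θ²`,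
with `τ = (κ+1)/(m κ)`. -/
noncomputable def hquad (m : ℕ) (κ x : ℝ) (k : ℕ) (θ : ℝ) : ℝ :=
  -((k : ℝ) - 1) * x -
    ((m : ℝ) - x + ((m : ℝ) + 1 - (k : ℝ)) * ((κ + 1) / ((m : ℝ) * κ)) * x) * θ + θ ^ 2

/-- Lemma S10(a)-(c) of the paper: `h(·; x, k)` has a unique positive root `θ(x,k)`;
it satisfies `θ(x,k) ≥ m`, `θ(0,k) = m`, and `θ(x,1) = m + x/κ`. -/
theorem stmt13 (m : ℕ) (hm : 2 ≤ m) (κ : ℝ) (hκ : 0 < κ)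
    (x : ℝ) (hx : 0 ≤ x) (k : ℕ) (hk1 : 1 ≤ k) (hk2 : k ≤ m) :
    ∃ θp : ℝ, (0 < θp ∧ hquad m κ x k θp = 0) ∧
      (∀ θ : ℝ, 0 < θ → hquad m κ x k θ = 0 → θ = θp) ∧
      (m : ℝ) ≤ θp ∧
      (x = 0 → θp = m) ∧
      (k = 1 → θp = (m : ℝ) + x / κ) := by
  have hm2 : (2 : ℝ) ≤ (m : ℝ) := by exact_mod_cast hm
  have hmpos : (0 : ℝ) < (m : ℝ) := by linarith
  have hk1' : (1 : ℝ) ≤ (k : ℝ) := by exact_mod_cast hk1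
  have hk2' : (k : ℝ) ≤ (m : ℝ) := by exact_mod_cast hk2
  have hmne : (m : ℝ) ≠ 0 := ne_of_gt hmpos
  have hκne : κ ≠ 0 := ne_of_gt hκ
  obtain ⟨b, hbdef⟩ : ∃ b : ℝ,
      b = (m : ℝ) - x + ((m : ℝ) + 1 - (k : ℝ)) * ((κ + 1) / ((m : ℝ) * κ)) * x := ⟨_, rfl⟩
  obtain ⟨c, hcdef⟩ : ∃ c : ℝ, c = ((k : ℝ) - 1) * x := ⟨_, rfl⟩
  have hq : ∀ θ : ℝ, hquad m κ x k θ = θ ^ 2 - b * θ - c := by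
    intro θ; rw [hbdef, hcdef]; unfold hquad; ring
  have hc : 0 ≤ c := by rw [hcdef]; exact mul_nonneg (by linarith) hx
  -- either b > 0 or c > 0
  have hbc : 0 < b ∨ 0 < c := by
    rcases eq_or_lt_of_le hx with hx0 | hx0
    · left; rw [hbdef, ← hx0]; simpa using hmpos
    · rcases eq_or_lt_of_le hk1' with hk1e | hk1g
      · left
        have hb : b = (m : ℝ) + x / κ := by
          rw [hbdef, ← hk1e]; field_simp; ring
        rw [hb]
        have : 0 ≤ x / κ := div_nonneg hx (le_of_lt hκ)
        linarith
      · right; rw [hcdef]; exact mul_pos (by linarith) hx0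
  obtain ⟨s, hsdef⟩ : ∃ s : ℝ, s = Real.sqrt (b ^ 2 + 4 * c) := ⟨_, rfl⟩
  have hsnn : 0 ≤ s := hsdef ▸ Real.sqrt_nonneg _
  have hs2 : s ^ 2 = b ^ 2 + 4 * c := hsdef ▸ Real.sq_sqrt (by nlinarith)
  have hsb : b ≤ s := by nlinarith
  refine ⟨(b + s) / 2, ⟨?_, ?_⟩, ?_, ?_, ?_, ?_⟩
  · -- positivity
    rcases hbc with hb | hcpos
    · linarith
    · nlinarith
  · rw [hq]; linear_combination hs2 / 4
  · -- uniqueness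
    intro θ hθ hθ0
    rw [hq] at hθ0
    have hf : (θ - (b + s) / 2) * (θ - (b - s) / 2) = 0 := by
      linear_combination hθ0 - hs2 / 4
    rcases mul_eq_zero.mp hf with h | h
    · linarith
    · linarith
  · -- ≥ m
    have key : (m : ℝ) ^ 2 ≤ (m : ℝ) * b + c := by
      have heq : (m : ℝ) * b + c = (m : ℝ) ^ 2 + x * ((m : ℝ) + 1 - (k : ℝ)) / κ := by
        rw [hbdef, hcdef]; field_simp; ring
      have : 0 ≤ x * ((m : ℝ) + 1 - (k : ℝ)) / κ :=
        div_nonneg (mul_nonneg hx (by linarith)) (le_of_lt hκ)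
      linarith
    by_contra hcon
    push_neg at hcon
    have h1 : s < 2 * (m : ℝ) - b := by linarith
    have h2 : (0 : ℝ) < 2 * (m : ℝ) - b + s := by linarith
    nlinarith [mul_pos (by linarith : (0:ℝ) < 2 * (m : ℝ) - b - s) h2]
  · -- x = 0
    intro hx0
    subst hx0
    have hb0 : b = (m : ℝ) := by rw [hbdef]; ring
    have hc0 : c = 0 := by rw [hcdef]; ring
    have hs0 : s = (m : ℝ) := by
      rw [hsdef, hb0, hc0]
      rw [show (m : ℝ) ^ 2 + 4 * 0 = (m : ℝ) ^ 2 by ring]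
      exact Real.sqrt_sq (le_of_lt hmpos)
    rw [hb0, hs0]; ring
  · -- k = 1
    intro hk0
    subst hk0
    have hb1 : b = (m : ℝ) + x / κ := by
      rw [hbdef]; push_cast; field_simp; ring
    have hc1 : c = 0 := by rw [hcdef]; push_cast; ring
    have hbpos : 0 < b := by
      rw [hb1]
      have : 0 ≤ x / κ := div_nonneg hx (le_of_lt hκ)
      linarith
    have hs1 : s = b := by
      rw [hsdef, hc1]
      rw [show b ^ 2 + 4 * 0 = b ^ 2 by ring]
      exact Real.sqrt_sq (le_of_lt hbpos)
    rw [hs1, hb1]; ring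
end

section
/- Let b > 0 and let F, G : ℝ → ℝ satisfy: (i) G is continuous and nonnegative on (0, b], G is not identically zero on (0, b], and G is differentiable on (0, b) with continuous nonnegative derivative on (0, b); (ii) F is continuous on (0, b), and there exists x₀ < b such that F(x)(x − x₀) ≥ 0 for all x ∈ (0, b) and F(x) > 0 for all x ∈ (0, b) with x > x₀. If F is Lebesgue integrable on (0, b) and ∫_0^b F(x) dx > 0, then the product F·G is Lebesgue integrable on (0, b) and ∫_0^b F(x) G(x) dx > 0. -/
open MeasureTheory

/-- Lemma S12 of the paper (modified from Bakirov (1989), Lemma 1): positivity of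
`∫₀^b F G` given monotone nonnegative `G` and sign-controlled `F` with positive integral. -/
theorem stmt18 (b : ℝ) (hb : 0 < b) (F G : ℝ → ℝ)
    (hGcont : ContinuousOn G (Set.Ioc 0 b))
    (hGnonneg : ∀ x ∈ Set.Ioc (0 : ℝ) b, 0 ≤ G x)
    (hGne : ∃ x ∈ Set.Ioc (0 : ℝ) b, G x ≠ 0)
    (hGdiff : ∀ x ∈ Set.Ioo (0 : ℝ) b, DifferentiableAt ℝ G x)
    (hG'cont : ContinuousOn (deriv G) (Set.Ioo 0 b))
    (hG'nonneg : ∀ x ∈ Set.Ioo (0 : ℝ) b, 0 ≤ deriv G x)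
    (hFcont : ContinuousOn F (Set.Ioo 0 b))
    (x₀ : ℝ) (hx₀ : x₀ < b)
    (hFsign : ∀ x ∈ Set.Ioo (0 : ℝ) b, 0 ≤ F x * (x - x₀))
    (hFpos : ∀ x ∈ Set.Ioo (0 : ℝ) b, x₀ < x → 0 < F x)
    (hFint : IntegrableOn F (Set.Ioo 0 b))
    (hFintpos : 0 < ∫ x in Set.Ioo (0 : ℝ) b, F x) :
    IntegrableOn (fun x => F x * G x) (Set.Ioo 0 b) ∧
      0 < ∫ x in Set.Ioo (0 : ℝ) b, F x * G x := by
  -- G is monotone on (0, b]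
  have hmono : MonotoneOn G (Set.Ioc 0 b) := by
    apply monotoneOn_of_deriv_nonneg (convex_Ioc 0 b) hGcont
    · rw [interior_Ioc]
      exact fun x hx => (hGdiff x hx).differentiableWithinAt
    · rw [interior_Ioc]; exact hG'nonneg
  -- Integrability of F * G
  have hFGcont : ContinuousOn (fun x => F x * G x) (Set.Ioo 0 b) :=
    hFcont.mul (hGcont.mono Set.Ioo_subset_Ioc_self)
  have hFGmeas : AEStronglyMeasurable (fun x => F x * G x)
      (volume.restrict (Set.Ioo 0 b)) :=
    hFGcont.aestronglyMeasurable measurableSet_Ioo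
  have hFGint : IntegrableOn (fun x => F x * G x) (Set.Ioo 0 b) := by
    apply Integrable.mono' (hFint.norm.mul_const (G b)) hFGmeas
    rw [ae_restrict_iff' measurableSet_Ioo]
    filter_upwards with x hx
    have hxI : x ∈ Set.Ioc (0 : ℝ) b := Set.Ioo_subset_Ioc_self hx
    have h1 : G x ≤ G b := hmono hxI (Set.right_mem_Ioc.mpr hb) hx.2.le
    have h2 : 0 ≤ G x := hGnonneg x hxI
    calc ‖F x * G x‖ = ‖F x‖ * |G x| := by rw [norm_mul]; rfl
      _ ≤ ‖F x‖ * G b := by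
          rw [abs_of_nonneg h2]
          exact mul_le_mul_of_nonneg_left h1 (norm_nonneg _)
  refine ⟨hFGint, ?_⟩
  -- Find c ∈ Ioo 0 b with G c > 0
  obtain ⟨d, hd, hGd⟩ := hGne
  have hGdpos : 0 < G d := lt_of_le_of_ne (hGnonneg d hd) (Ne.symm hGd)
  have hc : ∃ c ∈ Set.Ioo (0 : ℝ) b, 0 < G c := by
    rcases lt_or_eq_of_le hd.2 with hdb | hdb
    · exact ⟨d, ⟨hd.1, hdb⟩, hGdpos⟩
    · subst hdb
      haveI : (nhdsWithin d (Set.Ioo 0 d)).NeBot :=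
        mem_closure_iff_nhdsWithin_neBot.mp
          (by rw [closure_Ioo hb.ne]; exact Set.right_mem_Icc.mpr hb.le)
      have hcw : ContinuousWithinAt G (Set.Ioc 0 d) d :=
        hGcont.continuousWithinAt hd
      have hev : ∀ᶠ x in nhdsWithin d (Set.Ioc 0 d), 0 < G x :=
        hcw.eventually (eventually_gt_nhds hGdpos)
      have hev' : ∀ᶠ x in nhdsWithin d (Set.Ioo 0 d), 0 < G x :=
        hev.filter_mono (nhdsWithin_mono d Set.Ioo_subset_Ioc_self)
      obtain ⟨x, hx1, hx2⟩ := (hev'.and eventually_mem_nhdsWithin).exists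
      exact ⟨x, hx2, hx1⟩
  obtain ⟨c, hcI, hGc⟩ := hc
  by_cases hcase : 0 < x₀ ∧ 0 < G x₀
  · -- compare with G x₀ * ∫ F
    obtain ⟨hx₀0, hGx₀⟩ := hcase
    have hx₀I : x₀ ∈ Set.Ioc (0 : ℝ) b := ⟨hx₀0, hx₀.le⟩
    have key : ∫ x in Set.Ioo (0 : ℝ) b, F x * G x₀ ≤
        ∫ x in Set.Ioo (0 : ℝ) b, F x * G x := by
      apply setIntegral_mono_on (hFint.mul_const _) hFGint measurableSet_Ioo
      intro x hx
      have hxI : x ∈ Set.Ioc (0 : ℝ) b := Set.Ioo_subset_Ioc_self hx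
      rcases lt_trichotomy x x₀ with h | h | h
      · have hFx : F x ≤ 0 := by
          by_contra hpos
          push_neg at hpos
          have := hFsign x hx
          nlinarith
        have : G x ≤ G x₀ := hmono hxI hx₀I h.le
        exact mul_le_mul_of_nonpos_left this hFx
      · rw [h]
      · have hFx : 0 ≤ F x := (hFpos x hx h).le
        have : G x₀ ≤ G x := hmono hx₀I hxI h.le
        exact mul_le_mul_of_nonneg_left this hFx
    have : ∫ x in Set.Ioo (0 : ℝ) b, F x * G x₀ =
        (∫ x in Set.Ioo (0 : ℝ) b, F x) * G x₀ := integral_mul_const _ _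
    calc (0 : ℝ) < (∫ x in Set.Ioo (0 : ℝ) b, F x) * G x₀ :=
          mul_pos hFintpos hGx₀
      _ = ∫ x in Set.Ioo (0 : ℝ) b, F x * G x₀ := this.symm
      _ ≤ _ := key
  · -- FG ≥ 0 everywhere on Ioo 0 b, and positive beyond max c x₀
    push_neg at hcase
    have hFGnonneg : ∀ x ∈ Set.Ioo (0 : ℝ) b, 0 ≤ F x * G x := by
      intro x hx
      have hxI : x ∈ Set.Ioc (0 : ℝ) b := Set.Ioo_subset_Ioc_self hx
      rcases lt_or_ge x₀ x with h | h
      · exact mul_nonneg (hFpos x hx h).le (hGnonneg x hxI)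
      · -- x ≤ x₀, so 0 < x₀ and G x₀ = 0, hence G x = 0
        have hx₀0 : 0 < x₀ := lt_of_lt_of_le hx.1 h
        have hGx₀ : G x₀ = 0 :=
          le_antisymm (by simpa using hcase hx₀0) (hGnonneg x₀ ⟨hx₀0, hx₀.le⟩)
        have hGx : G x = 0 :=
          le_antisymm (hGx₀ ▸ hmono hxI ⟨hx₀0, hx₀.le⟩ h) (hGnonneg x hxI)
        simp [hGx]
    set m : ℝ := max c x₀ with hm
    have hmI : m ∈ Set.Ioo (0 : ℝ) b :=
      ⟨lt_of_lt_of_le hcI.1 (le_max_left _ _), max_lt hcI.2 hx₀⟩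
    have hsub : Set.Ioo m b ⊆ Set.Ioo (0 : ℝ) b :=
      Set.Ioo_subset_Ioo hmI.1.le le_rfl
    have hFGposm : ∀ x ∈ Set.Ioo m b, 0 < F x * G x := by
      intro x hx
      have hx' : x ∈ Set.Ioo (0 : ℝ) b := hsub hx
      have hFx : 0 < F x :=
        hFpos x hx' (lt_of_le_of_lt (le_max_right _ _) hx.1)
      have hGx : 0 < G x :=
        lt_of_lt_of_le hGc (hmono (Set.Ioo_subset_Ioc_self hcI)
          (Set.Ioo_subset_Ioc_self hx')
          ((le_max_left c x₀).trans hx.1.le))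
      exact mul_pos hFx hGx
    have hintm : IntegrableOn (fun x => F x * G x) (Set.Ioo m b) :=
      hFGint.mono_set hsub
    have hae : 0 ≤ᶠ[ae (volume.restrict (Set.Ioo m b))] fun x => F x * G x :=
      (ae_restrict_iff' measurableSet_Ioo).mpr
        (Filter.Eventually.of_forall fun x hx => (hFGposm x hx).le)
    have hposm : 0 < ∫ x in Set.Ioo m b, F x * G x := by
      rw [setIntegral_pos_iff_support_of_nonneg_ae hae hintm]
      have : Set.Ioo m b ⊆ Function.support (fun x => F x * G x) ∩ Set.Ioo m b :=
        fun x hx => ⟨(hFGposm x hx).ne', hx⟩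
      calc (0 : ENNReal) < volume (Set.Ioo m b) := by
            rw [Real.volume_Ioo]; simpa using hmI.2
        _ ≤ _ := measure_mono this
    refine lt_of_lt_of_le hposm (setIntegral_mono_set hFGint ?_ ?_)
    · exact (ae_restrict_iff' measurableSet_Ioo).mpr
        (Filter.Eventually.of_forall fun x hx => hFGnonneg x hx)
    · exact Filter.Eventually.of_forall hsub
end

section
/- Let m ≥ 2 be an integer, δ ∈ ℝ, c > 0 with c ≠ m^{-1/2}, and σ_1, …, σ_{m+1} ≥ 0 not all zero. Let ψ_1, …, ψ_{m+1} be independent real random variables with ψ_j ~ N(0, σ_j²) for each j. Then P[ (ψ_{m+1} − ψ̄_m + δ)² = c² S_m² ] = 0, where ψ̄_m and S_m² are the sample mean and sample variance of ψ_1, …, ψ_m. -/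
open MeasureTheory ProbabilityTheory

lemma aux_quad_finite {a b c : ℝ} (ha : a ≠ 0) :
    {x : ℝ | a * x ^ 2 + b * x + c = 0}.Finite := by
  have hp : (Polynomial.C a * Polynomial.X ^ 2 + Polynomial.C b * Polynomial.X
      + Polynomial.C c : Polynomial ℝ) ≠ 0 := by
    intro h
    have := congrArg (fun p => Polynomial.coeff p 2) h
    simp [Polynomial.coeff_add, Polynomial.coeff_C] at this
    exact ha this
  have := Polynomial.finite_setOf_isRoot hp
  refine this.subset ?_
  intro x hx
  simp only [Set.mem_setOf_eq, Polynomial.IsRoot, Polynomial.eval_add, Polynomial.eval_mul,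
    Polynomial.eval_pow, Polynomial.eval_C, Polynomial.eval_X]
  simpa using hx

lemma aux_sum_sq {m : ℕ} (hm : (m : ℝ) ≠ 0) (y : Fin m → ℝ) :
    ∑ j, (y j - sMean y) ^ 2 = ∑ j, (y j) ^ 2 - m * (sMean y) ^ 2 := by
  have hsum : ∑ j, y j = m * sMean y := by
    rw [sMean, mul_div_assoc', mul_div_cancel_left₀ _ hm]
  have : ∀ j : Fin m, (y j - sMean y) ^ 2 = (y j) ^ 2 - 2 * sMean y * y j + (sMean y) ^ 2 := by
    intro j; ring
  rw [Finset.sum_congr rfl fun j _ => this j]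
  rw [Finset.sum_add_distrib, Finset.sum_sub_distrib, ← Finset.mul_sum, hsum,
    Finset.sum_const, Finset.card_univ, Fintype.card_fin, nsmul_eq_mul]
  ring

lemma aux_iIndepFun_ae_eq {ι : Type*} {Ω : Type*} [MeasurableSpace Ω] {P : Measure Ω}
    {f g : ι → Ω → ℝ}
    (h : iIndepFun f P) (he : ∀ i, f i =ᵐ[P] g i) :
    iIndepFun g P := by
  rw [iIndepFun_iff_measure_inter_preimage_eq_mul] at h ⊢
  intro S sets hsets
  have hae : ∀ᵐ ω ∂P, ∀ i ∈ S, f i ω = g i ω :=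
    (Filter.eventually_all_finset S).2 fun i _ => he i
  have h1 : P (⋂ i ∈ S, g i ⁻¹' sets i) = P (⋂ i ∈ S, f i ⁻¹' sets i) := by
    refine measure_congr ?_
    filter_upwards [hae] with ω hω
    show (ω ∈ ⋂ i ∈ S, g i ⁻¹' sets i) = (ω ∈ ⋂ i ∈ S, f i ⁻¹' sets i)
    simp only [Set.mem_iInter, Set.mem_preimage, eq_iff_iff]
    constructor <;> intro hh i hi
    · rw [hω i hi]; exact hh i hi
    · rw [← hω i hi]; exact hh i hi
  have h2 : ∀ i ∈ S, P (g i ⁻¹' sets i) = P (f i ⁻¹' sets i) := by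
    intro i hi
    refine measure_congr ?_
    filter_upwards [he i] with ω hω
    show (ω ∈ g i ⁻¹' sets i) = (ω ∈ f i ⁻¹' sets i)
    simp [Set.mem_preimage, hω]
  rw [h1, h S hsets, Finset.prod_congr rfl h2]

/-- Lemma S13 of the paper: the distribution of `(ψ_{m+1} − ψ̄_m + δ)² − c² S_m²`
has no point mass at zero. -/
theorem stmt19 (m : ℕ) (hm : 2 ≤ m) (δ : ℝ) (c : ℝ) (hc : 0 < c)
    (hc' : c ≠ (Real.sqrt m)⁻¹)
    (σ : Fin (m + 1) → ℝ) (hσ : ∀ j, 0 ≤ σ j) (hσne : ∃ j, σ j ≠ 0)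
    {Ω : Type} [MeasurableSpace Ω] (P : Measure Ω) [IsProbabilityMeasure P]
    (ψ : Fin (m + 1) → Ω → ℝ)
    (hindep : iIndepFun ψ P)
    (hdist : ∀ j, P.map (ψ j) = gaussianReal 0 ⟨σ j ^ 2, sq_nonneg _⟩) :
    P {ω | (ψ (Fin.last m) ω - sMean (fun j : Fin m => ψ j.castSucc ω) + δ) ^ 2 =
        c ^ 2 * sVar (fun j : Fin m => ψ j.castSucc ω)} = 0 := by
  classical
  obtain ⟨k, hk⟩ := hσne
  have hm2 : (2 : ℝ) ≤ (m : ℝ) := by exact_mod_cast hm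
  have hm0 : (m : ℝ) ≠ 0 := by linarith
  have hm1 : (m : ℝ) - 1 ≠ 0 := by linarith
  set q : (Fin (m + 1) → ℝ) → ℝ := fun y =>
    (y (Fin.last m) - sMean (fun j : Fin m => y j.castSucc) + δ) ^ 2
      - c ^ 2 * sVar (fun j : Fin m => y j.castSucc) with hqdef
  -- measurable versions of ψ
  have haem : ∀ j, AEMeasurable (ψ j) P := by
    intro j
    by_contra h
    have h0 : P.map (ψ j) = 0 := Measure.map_of_not_aemeasurable h
    rw [hdist j] at h0
    have h1 : (gaussianReal 0 ⟨σ j ^ 2, sq_nonneg _⟩) Set.univ = 1 :=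
      (instIsProbabilityMeasureGaussianReal _ _).measure_univ
    rw [h0] at h1
    simp at h1
  set φ : Fin (m + 1) → Ω → ℝ := fun j => (haem j).mk (ψ j) with hφdef
  have hφmeas : ∀ j, Measurable (φ j) := fun j => (haem j).measurable_mk
  have hφeq : ∀ j, ψ j =ᵐ[P] φ j := fun j => (haem j).ae_eq_mk
  have hφindep := aux_iIndepFun_ae_eq hindep hφeq
  have hφdist : ∀ j, P.map (φ j) = gaussianReal 0 ⟨σ j ^ 2, sq_nonneg _⟩ := fun j => by
    rw [← Measure.map_congr (hφeq j), hdist j]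
  -- pair of independent random variables
  set T : Finset (Fin (m + 1)) := Finset.univ.erase k with hTdef
  set X : Ω → ℝ := fun ω => φ k ω with hXdef
  set Y : Ω → (Fin (m + 1) → ℝ) :=
    fun ω j => if h : j ∈ T then φ j ω else 0 with hYdef
  have hgmeas : Measurable (fun (v : T → ℝ) (j : Fin (m + 1)) =>
      if h : j ∈ T then v ⟨j, h⟩ else 0) := by
    refine measurable_pi_lambda _ fun j => ?_
    by_cases h : j ∈ T
    · simp only [h, dif_pos]
      exact measurable_pi_apply _
    · simp only [h, dif_neg, not_false_iff]
      exact measurable_const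
  have hXY : IndepFun Y X P := by
    have h0 := hφindep.indepFun_finset T {k} (by simp [hTdef]) hφmeas
    have h1 := h0.comp hgmeas
      (measurable_pi_apply (⟨k, Finset.mem_singleton_self k⟩ : ({k} : Finset (Fin (m + 1)))))
    exact h1
  have hXmeas : Measurable X := hφmeas k
  have hYmeas : Measurable Y := by
    refine measurable_pi_lambda _ fun j => ?_
    by_cases h : j ∈ T
    · simpa [hYdef, h] using hφmeas j
    · simp [hYdef, h]
  have hmap : P.map (fun ω => (Y ω, X ω)) = (P.map Y).prod (P.map X) :=
    (indepFun_iff_map_prod_eq_prod_map_map hYmeas.aemeasurable hXmeas.aemeasurable).mp hXY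
  -- the bad set
  set A : Set ((Fin (m + 1) → ℝ) × ℝ) :=
    {p | q (Function.update p.1 k p.2) = 0} with hAdef
  have hc1 : Continuous fun y : Fin (m + 1) → ℝ => sMean (fun j : Fin m => y j.castSucc) := by
    show Continuous fun y : Fin (m + 1) → ℝ => (∑ j : Fin m, y j.castSucc) / (m : ℝ)
    apply Continuous.div_const
    apply continuous_finset_sum
    intro j _
    exact continuous_apply _
  have hc2 : Continuous fun y : Fin (m + 1) → ℝ => sVar (fun j : Fin m => y j.castSucc) := by
    show Continuous fun y : Fin (m + 1) → ℝ =>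
      (∑ j : Fin m, (y j.castSucc - sMean (fun t : Fin m => y t.castSucc)) ^ 2) / ((m : ℝ) - 1)
    apply Continuous.div_const
    apply continuous_finset_sum
    intro j _
    exact ((continuous_apply _).sub hc1).pow 2
  have hqcont : Continuous q := by
    rw [hqdef]
    exact ((((continuous_apply _).sub hc1).add continuous_const).pow 2).sub
      (continuous_const.mul hc2)
  have hupdcont : Continuous fun p : (Fin (m + 1) → ℝ) × ℝ => Function.update p.1 k p.2 := by
    refine continuous_pi fun j => ?_
    rcases eq_or_ne j k with rfl | hjk
    · simpa [Function.update_self] using continuous_snd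
    · simp only [Function.update_of_ne hjk]
      exact (continuous_apply j).comp continuous_fst
  have hAmeas : MeasurableSet A := by
    have : A = (fun p : (Fin (m + 1) → ℝ) × ℝ => q (Function.update p.1 k p.2)) ⁻¹' {0} := by
      ext p; simp [hAdef]
    rw [this]
    exact (hqcont.comp hupdcont).measurable (measurableSet_singleton 0)
  -- rewrite the event
  have hev : P {ω | (ψ (Fin.last m) ω - sMean (fun j : Fin m => ψ j.castSucc ω) + δ) ^ 2 =
        c ^ 2 * sVar (fun j : Fin m => ψ j.castSucc ω)}
      = P ((fun ω => (Y ω, X ω)) ⁻¹' A) := by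
    refine measure_congr ?_
    have hae : ∀ᵐ ω ∂P, ∀ j, ψ j ω = φ j ω := ae_all_iff.2 hφeq
    filter_upwards [hae] with ω hω
    have hupdate : Function.update (Y ω) k (X ω) = fun j => ψ j ω := by
      funext j
      rcases eq_or_ne j k with rfl | h
      · rw [Function.update_self, hXdef, hω j]
      · rw [Function.update_of_ne h]
        have hjT : j ∈ T := by simp [hTdef, h]
        simp only [hYdef, hjT, dif_pos]
        rw [hω j]
    show ((ψ (Fin.last m) ω - sMean (fun j : Fin m => ψ j.castSucc ω) + δ) ^ 2 =
        c ^ 2 * sVar (fun j : Fin m => ψ j.castSucc ω)) = ((Y ω, X ω) ∈ A)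
    simp only [hAdef, Set.mem_setOf_eq, hupdate, hqdef]
    rw [eq_iff_iff]
    exact sub_eq_zero.symm
  rw [hev, ← Measure.map_apply (hYmeas.prodMk hXmeas) hAmeas, hmap,
    Measure.prod_apply hAmeas]
  -- sections are finite
  have hfin : ∀ z : Fin (m + 1) → ℝ, (Prod.mk z ⁻¹' A).Finite := by
    intro z
    have hset : Prod.mk z ⁻¹' A = {x | q (Function.update z k x) = 0} := by
      ext x; simp [hAdef]
    rw [hset]
    rcases Fin.eq_castSucc_or_eq_last k with ⟨i, rfl⟩ | rfl
    · -- k = i.castSucc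
      set z' : Fin m → ℝ := fun j => z j.castSucc with hz'def
      set T' : ℝ := (∑ j, z' j) - z' i with hT'def
      set V : ℝ := (∑ j, z' j ^ 2) - z' i ^ 2 with hVdef
      have hupd : ∀ x, (fun j : Fin m => Function.update z i.castSucc x j.castSucc)
          = Function.update z' i x := by
        intro x; funext j
        rcases eq_or_ne j i with rfl | hji
        · simp
        · rw [Function.update_of_ne (fun hcon => hji (Fin.castSucc_inj.mp hcon)),
            Function.update_of_ne hji]
      have hlast : ∀ x : ℝ, Function.update z i.castSucc x (Fin.last m) = z (Fin.last m) :=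
        fun x => Function.update_of_ne (Fin.castSucc_lt_last i).ne' _ _
      have hsum : ∀ x, ∑ j, Function.update z' i x j = T' + x := by
        intro x
        rw [Finset.sum_update_of_mem (Finset.mem_univ i),
          Finset.sum_sdiff_eq_sub (Finset.subset_univ {i}), Finset.sum_singleton, hT'def]
        ring
      have hsumsq : ∀ x, ∑ j, (Function.update z' i x j) ^ 2 = V + x ^ 2 := by
        intro x
        have heq : ∀ j, (Function.update z' i x j) ^ 2
            = Function.update (fun t => z' t ^ 2) i (x ^ 2) j := by
          intro j
          rcases eq_or_ne j i with rfl | hji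
          · simp
          · rw [Function.update_of_ne hji, Function.update_of_ne hji]
        rw [Finset.sum_congr rfl fun j _ => heq j,
          Finset.sum_update_of_mem (Finset.mem_univ i),
          Finset.sum_sdiff_eq_sub (Finset.subset_univ {i}), Finset.sum_singleton, hVdef]
        ring
      have hmean : ∀ x, sMean (Function.update z' i x) = (T' + x) / m := by
        intro x; rw [sMean, hsum x]
      have hvar : ∀ x, sVar (Function.update z' i x)
          = ((V + x ^ 2) - m * ((T' + x) / m) ^ 2) / ((m : ℝ) - 1) := by
        intro x
        rw [sVar, aux_sum_sq hm0, hmean x, hsumsq x]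
      set a : ℝ := 1 / (m : ℝ) ^ 2 - c ^ 2 / m with hadef
      have ha : a ≠ 0 := by
        intro h0
        have hcsq : c ^ 2 = 1 / (m : ℝ) := by
          rw [hadef] at h0
          field_simp at h0
          field_simp
          nlinarith [h0]
        have : c = (Real.sqrt m)⁻¹ := by
          have h2 : c = Real.sqrt (1 / (m : ℝ)) := by
            rw [← hcsq]; exact (Real.sqrt_sq hc.le).symm
          rw [h2, one_div, Real.sqrt_inv]
        exact hc' this
      set L : ℝ := z (Fin.last m) with hLdef
      set Aq : ℝ := L + δ - T' / m with hAqdef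
      have key : ∀ x, q (Function.update z i.castSucc x)
          = a * x ^ 2 + (-2 * Aq / m + 2 * c ^ 2 * T' / ((m : ℝ) * ((m : ℝ) - 1))) * x
            + (Aq ^ 2 - c ^ 2 * (V - T' ^ 2 / m) / ((m : ℝ) - 1)) := by
        intro x
        simp only [hqdef]
        rw [hlast x, hupd x, hmean x, hvar x, hadef, hAqdef]
        field_simp
        ring
      have : {x | q (Function.update z i.castSucc x) = 0}
          = {x | a * x ^ 2 + (-2 * Aq / m + 2 * c ^ 2 * T' / ((m : ℝ) * ((m : ℝ) - 1))) * x
            + (Aq ^ 2 - c ^ 2 * (V - T' ^ 2 / m) / ((m : ℝ) - 1)) = 0} := by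
        ext x; simp [key x]
      rw [this]
      exact aux_quad_finite ha
    · -- k = last
      set z' : Fin m → ℝ := fun j => z j.castSucc with hz'def
      have hupd : ∀ x : ℝ, (fun j : Fin m => Function.update z (Fin.last m) x j.castSucc) = z' := by
        intro x; funext j
        exact Function.update_of_ne (Fin.castSucc_lt_last j).ne _ _
      have key : ∀ x, q (Function.update z (Fin.last m) x)
          = 1 * x ^ 2 + (2 * (δ - sMean z')) * x
            + ((δ - sMean z') ^ 2 - c ^ 2 * sVar z') := by
        intro x
        simp only [hqdef]
        rw [Function.update_self, hupd x]
        ring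
      have : {x | q (Function.update z (Fin.last m) x) = 0}
          = {x | 1 * x ^ 2 + (2 * (δ - sMean z')) * x
            + ((δ - sMean z') ^ 2 - c ^ 2 * sVar z') = 0} := by
        ext x; simp [key x]
      rw [this]
      exact aux_quad_finite one_ne_zero
  -- sections are null for the Gaussian
  have hv : (⟨σ k ^ 2, sq_nonneg _⟩ : NNReal) ≠ 0 := by
    intro h
    exact pow_ne_zero 2 hk (by simpa using congrArg Subtype.val h)
  have hzero : ∀ z, (P.map X) (Prod.mk z ⁻¹' A) = 0 := by
    intro z
    rw [hXdef, hφdist k]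
    refine gaussianReal_absolutelyContinuous 0 hv ?_
    exact ((hfin z).countable.measure_zero volume)
  rw [lintegral_congr hzero, lintegral_zero]
end
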